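/- For every k with 0 < k < min_{1≤s≤m} a^s + δ there exists a positive constant R_k, depending only on k and on the parameters a^s, b^s, δ, r, q^{x0}, n_s, z, x̄₀, such that for all x̄', x̄'' ∈ G, ‖M(x̄') − M(x̄'')‖_k ≤ λ R_k ‖x̄' − x̄''‖_k, where λ is the Lipschitz constant of g on [z − y, x̄₀ − y]. -/

import Mathlib

open MeasureTheory

/-- The set `G = {x continuous on [0,∞) : z ≤ x(t) ≤ x̄₀ for all t ≥ 0}`. -/
def Gset (z xbar0 : ℝ) : Set (ℝ → ℝ) :=
  {x : ℝ → ℝ | ContinuousOn x (Set.Ici 0) ∧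
    ∀ t ≥ (0 : ℝ), z ≤ x t ∧ x t ≤ xbar0}

/-- The weighted supremum norm `‖x‖_k = sup_{t ≥ 0} e^{-kt} |x t|`. -/
noncomputable def normk (k : ℝ) (x : ℝ → ℝ) : ℝ :=
  sSup ((fun t => Real.exp (-k * t) * |x t|) '' Set.Ici (0 : ℝ))

/-- The cost coefficient trajectory `Δ(x̄)(t) = |∫₀ᵗ g(x̄(τ) − y) dτ|`. -/
noncomputable def Δop (g : ℝ → ℝ) (y : ℝ) (x : ℝ → ℝ) (t : ℝ) : ℝ :=
  |∫ τ in (0 : ℝ)..t, g (x τ - y)|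

/-- `φ(t,η) = exp(−∫_η^t (a + (b²/r) π(τ)) dτ)` (here `br = b²/r`). -/
noncomputable def phiF (a br : ℝ) (π : ℝ → ℝ) (t η : ℝ) : ℝ :=
  Real.exp (-(∫ τ in η..t, (a + br * π τ)))

/-- `ψ(t,η) = exp(−∫_η^t (a + δ + (b²/r) π(τ)) dτ)` (here `br = b²/r`). -/
noncomputable def psiF (a δ br : ℝ) (π : ℝ → ℝ) (t η : ℝ) : ℝ :=
  Real.exp (-(∫ τ in η..t, (a + δ + br * π τ)))

/-- The mean-field operator
`M(x̄)(t) = Σ_s n_s [z + φˢ(t,0)(x̄₀ − z) + Cˢ ∫₀ᵗ φˢ(t,η) (∫_η^∞ ψˢ(τ,η) dτ) dη]`,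
where `πˢ = π s x̄` is the Riccati solution corresponding to `Δ(x̄)` and
`Cˢ = ((bˢ)²/r q^{x0} + (aˢ)² + aˢδ)(x̄₀ − z)`. -/
noncomputable def Mop (m : ℕ) (a b n : Fin m → ℝ) (δ r qx0 z xbar0 : ℝ)
    (π : Fin m → (ℝ → ℝ) → ℝ → ℝ) (x : ℝ → ℝ) (t : ℝ) : ℝ :=
  ∑ s : Fin m, n s *
    (z + phiF (a s) ((b s) ^ 2 / r) (π s x) t 0 * (xbar0 - z) +
      (((b s) ^ 2 / r) * qx0 + (a s) ^ 2 + (a s) * δ) * (xbar0 - z) *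
        ∫ η in (0 : ℝ)..t, phiF (a s) ((b s) ^ 2 / r) (π s x) t η *
          (∫ τ in Set.Ioi η, psiF (a s) δ ((b s) ^ 2 / r) (π s x) τ η))

namespace MFGaux

lemma cont_ext {x : ℝ → ℝ} (hx : ContinuousOn x (Set.Ici 0)) :
    Continuous (fun t : ℝ => x (max t 0)) :=
  hx.comp_continuous (continuous_id.max continuous_const) (fun t => Set.mem_Ici.2 (le_max_right _ _))

noncomputable def prim (f : ℝ → ℝ) : ℝ → ℝ := fun u => ∫ s in (0:ℝ)..u, f s

lemma prim_hasDerivAt {f : ℝ → ℝ} (hf : Continuous f) (t : ℝ) :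
    HasDerivAt (prim f) (f t) t :=
  intervalIntegral.integral_hasDerivAt_right (hf.intervalIntegrable _ _)
    (hf.stronglyMeasurableAtFilter _ _) hf.continuousAt

lemma prim_continuous {f : ℝ → ℝ} (hf : Continuous f) : Continuous (prim f) :=
  continuous_iff_continuousAt.2 fun t => (prim_hasDerivAt hf t).continuousAt

lemma integral_eq_prim_sub {f : ℝ → ℝ} (hf : Continuous f) (s t : ℝ) :
    ∫ u in s..t, f u = prim f t - prim f s := by
  have h : (∫ u in (0:ℝ)..s, f u) + (∫ u in s..t, f u) = ∫ u in (0:ℝ)..t, f u :=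
    intervalIntegral.integral_add_adjacent_intervals
      (hf.intervalIntegrable 0 s) (hf.intervalIntegrable s t)
  simp only [prim]; linarith

lemma prim_lower {f : ℝ → ℝ} (hf : Continuous f) {c s t : ℝ} (hst : s ≤ t)
    (hc : ∀ u ∈ Set.Icc s t, c ≤ f u) : c * (t - s) ≤ prim f t - prim f s := by
  rw [← integral_eq_prim_sub hf s t]
  have h0 : ∫ u in s..t, (fun _ => c) u ≤ ∫ u in s..t, f u :=
    intervalIntegral.integral_mono_on (μ := volume) hst intervalIntegrable_const
      (hf.intervalIntegrable _ _) hc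
  simpa [mul_comm] using h0

lemma abs_exp_neg_sub_exp_neg {c u v : ℝ} (hu : c ≤ u) (hv : c ≤ v) :
    |Real.exp (-u) - Real.exp (-v)| ≤ Real.exp (-c) * |u - v| := by
  wlog huv : v ≤ u generalizing u v
  · rw [abs_sub_comm, abs_sub_comm u v]; exact this hv hu (le_of_not_ge huv)
  have h1 : Real.exp (-u) ≤ Real.exp (-v) := Real.exp_le_exp.2 (by linarith)
  rw [abs_of_nonpos (by linarith), abs_of_nonneg (by linarith)]
  have key : Real.exp (-v) - Real.exp (-u) = Real.exp (-v) * (1 - Real.exp (-(u - v))) := by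
    rw [mul_sub, mul_one, ← Real.exp_add]; ring_nf
  rw [neg_sub, key]
  have h2 : 1 - Real.exp (-(u-v)) ≤ u - v := by nlinarith [Real.add_one_le_exp (-(u-v))]
  have h3 : Real.exp (-v) ≤ Real.exp (-c) := Real.exp_le_exp.2 (by linarith)
  have h4 : 0 ≤ 1 - Real.exp (-(u-v)) := by
    have : Real.exp (-(u-v)) ≤ 1 := Real.exp_le_one_iff.2 (by linarith)
    linarith
  nlinarith [Real.exp_pos (-v)]

lemma expdecay_integrableOn {c : ℝ} (hc : 0 < c) (t : ℝ) :
    IntegrableOn (fun η => Real.exp (-(c * (η - t)))) (Set.Ioi t) := by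
  have h0 : IntegrableOn (fun η => Real.exp (c*t) * Real.exp (-c * η)) (Set.Ioi t) :=
    (exp_neg_integrableOn_Ioi t hc).const_mul _
  have heq : Set.EqOn (fun η => Real.exp (c*t) * Real.exp (-c * η))
      (fun η => Real.exp (-(c * (η - t)))) (Set.Ioi t) := by
    intro η _; simp only [← Real.exp_add]; congr 1; ring
  exact h0.congr_fun heq measurableSet_Ioi

lemma expdecay_integral {c : ℝ} (hc : 0 < c) (t : ℝ) :
    ∫ η in Set.Ioi t, Real.exp (-(c * (η - t))) = 1 / c := by
  have hd : ∀ x ∈ Set.Ici t, HasDerivAt (fun η => -(1/c) * Real.exp (-(c*(η - t))))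
      (Real.exp (-(c*(x - t)))) x := by
    intro x _
    have h1 : HasDerivAt (fun η : ℝ => -(c*(η - t))) (-c) x := by
      exact (((hasDerivAt_id x).sub_const t).const_mul c).neg.congr_deriv (by simp)
    have h2 := (h1.exp).const_mul (-(1/c))
    refine h2.congr_deriv ?_
    field_simp
  have htend : Filter.Tendsto (fun η => -(1/c) * Real.exp (-(c*(η - t)))) Filter.atTop (nhds 0) := by
    have h1 : Filter.Tendsto (fun η : ℝ => c*(η - t)) Filter.atTop Filter.atTop :=
      (Filter.tendsto_atTop_add_const_right _ (-t) Filter.tendsto_id).const_mul_atTop hc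
    have h2 : Filter.Tendsto (fun η : ℝ => Real.exp (-(c*(η - t)))) Filter.atTop (nhds 0) :=
      Real.tendsto_exp_neg_atTop_nhds_zero.comp h1
    simpa using h2.const_mul (-(1/c))
  have := MeasureTheory.integral_Ioi_of_hasDerivAt_of_tendsto' hd
    (expdecay_integrableOn hc t) htend
  rw [this]; simp

lemma expdecay_intervalIntegral_le {c : ℝ} (hc : 0 < c) {t T : ℝ} (h : t ≤ T) :
    ∫ η in t..T, Real.exp (-(c * (η - t))) ≤ 1 / c := by
  rw [intervalIntegral.integral_of_le h, ← expdecay_integral hc t]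
  exact setIntegral_mono_set (expdecay_integrableOn hc t)
    (Filter.Eventually.of_forall fun η => (Real.exp_pos _).le)
    (HasSubset.Subset.eventuallyLE Set.Ioc_subset_Ioi_self)

lemma integral_exp_decay_le {a : ℝ} (ha : 0 < a) {s t : ℝ} (h : s ≤ t) :
    ∫ η in s..t, Real.exp (-(a*(t-η))) ≤ 1/a := by
  have hd : ∀ x ∈ Set.uIcc s t, HasDerivAt (fun η => (1/a) * Real.exp (-(a*(t - η))))
      (Real.exp (-(a*(t - x)))) x := by
    intro x _
    have h1 : HasDerivAt (fun η : ℝ => -(a*(t - η))) a x := by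
      exact (((hasDerivAt_id x).const_sub t).const_mul a).neg.congr_deriv (by simp)
    have h2 := (h1.exp).const_mul (1/a)
    refine h2.congr_deriv ?_
    field_simp
  have := intervalIntegral.integral_eq_sub_of_hasDerivAt hd
    ((Real.continuous_exp.comp (by continuity)).intervalIntegrable s t)
  rw [this]
  have e1 : Real.exp (-(a*(t-t))) = 1 := by norm_num
  have e2 : (0:ℝ) < Real.exp (-(a*(t-s))) := Real.exp_pos _
  rw [e1]
  have : (0:ℝ) ≤ (1/a) * Real.exp (-(a*(t-s))) := by positivity
  calc (1/a) * 1 - (1/a) * Real.exp (-(a*(t-s))) ≤ (1/a) * 1 := by linarith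
  _ = 1/a := by ring

lemma integral_exp_mul {k : ℝ} (hk : k ≠ 0) (s t : ℝ) :
    ∫ τ in s..t, Real.exp (k*τ) = (Real.exp (k*t) - Real.exp (k*s))/k := by
  have hd : ∀ x ∈ Set.uIcc s t, HasDerivAt (fun τ => Real.exp (k*τ)/k)
      (Real.exp (k*x)) x := by
    intro x _
    have h1 : HasDerivAt (fun τ : ℝ => k*τ) k x := by simpa using (hasDerivAt_id x).const_mul k
    have h2 := (h1.exp).div_const k
    refine h2.congr_deriv ?_
    field_simp
  have := intervalIntegral.integral_eq_sub_of_hasDerivAt hd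
    ((Real.continuous_exp.comp (by continuity)).intervalIntegrable s t)
  rw [this]; ring

lemma delta_lip (g : ℝ → ℝ) (y z xbar0 k lam N : ℝ) (hk : 0 < k)
    (hlam : 0 ≤ lam) (hN0 : 0 ≤ N)
    (x₁ x₂ : ℝ → ℝ)
    (hb₁ : ∀ t ≥ (0:ℝ), z ≤ x₁ t ∧ x₁ t ≤ xbar0) (hb₂ : ∀ t ≥ (0:ℝ), z ≤ x₂ t ∧ x₂ t ≤ xbar0)
    (hG₁ : Continuous (fun τ => g (x₁ (max τ 0) - y)))
    (hG₂ : Continuous (fun τ => g (x₂ (max τ 0) - y)))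
    (hglip : ∀ u ∈ Set.Icc (z - y) (xbar0 - y), ∀ v ∈ Set.Icc (z - y) (xbar0 - y),
      |g u - g v| ≤ lam * |u - v|)
    (hN : ∀ t ≥ (0:ℝ), |x₁ t - x₂ t| ≤ N * Real.exp (k*t))
    {t : ℝ} (ht : 0 ≤ t) :
    |abs (prim (fun τ => g (x₁ (max τ 0) - y)) t) - abs (prim (fun τ => g (x₂ (max τ 0) - y)) t)|
      ≤ lam * N / k * Real.exp (k*t) := by
  set G₁ := fun τ => g (x₁ (max τ 0) - y) with hG₁def
  set G₂ := fun τ => g (x₂ (max τ 0) - y) with hG₂def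
  have step1 : |abs (prim G₁ t) - abs (prim G₂ t)| ≤ |prim G₁ t - prim G₂ t| :=
    abs_abs_sub_abs_le_abs_sub _ _
  have step2 : prim G₁ t - prim G₂ t = ∫ τ in (0:ℝ)..t, (G₁ τ - G₂ τ) := by
    rw [intervalIntegral.integral_sub (hG₁.intervalIntegrable _ _)
      (hG₂.intervalIntegrable _ _)]
    rfl
  have step3 : |∫ τ in (0:ℝ)..t, (G₁ τ - G₂ τ)| ≤ ∫ τ in (0:ℝ)..t, |G₁ τ - G₂ τ| :=
    intervalIntegral.abs_integral_le_integral_abs ht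
  have step4 : (∫ τ in (0:ℝ)..t, |G₁ τ - G₂ τ|) ≤ ∫ τ in (0:ℝ)..t, lam * N * Real.exp (k*τ) := by
    refine intervalIntegral.integral_mono_on (μ := volume) ht
      ((hG₁.sub hG₂).abs.intervalIntegrable _ _)
      ((continuous_const.mul (Real.continuous_exp.comp (continuous_const.mul continuous_id))).intervalIntegrable _ _)
      (fun τ hτ => ?_)
    have hτ0 : (0:ℝ) ≤ τ := hτ.1
    have hmx : max τ 0 = τ := max_eq_left hτ0
    have hu : x₁ τ - y ∈ Set.Icc (z - y) (xbar0 - y) := by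
      have := hb₁ τ hτ0; constructor <;> [linarith [this.1]; linarith [this.2]]
    have hv : x₂ τ - y ∈ Set.Icc (z - y) (xbar0 - y) := by
      have := hb₂ τ hτ0; constructor <;> [linarith [this.1]; linarith [this.2]]
    have h1 : |G₁ τ - G₂ τ| ≤ lam * |(x₁ τ - y) - (x₂ τ - y)| := by
      simp only [hG₁def, hG₂def, hmx]
      exact hglip _ hu _ hv
    have h2 : |(x₁ τ - y) - (x₂ τ - y)| = |x₁ τ - x₂ τ| := by congr 1; ring
    have h3 := hN τ hτ0
    calc |G₁ τ - G₂ τ| ≤ lam * |x₁ τ - x₂ τ| := by rw [← h2]; exact h1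
    _ ≤ lam * (N * Real.exp (k*τ)) := mul_le_mul_of_nonneg_left h3 hlam
    _ = lam * N * Real.exp (k*τ) := by ring
  have step5 : (∫ τ in (0:ℝ)..t, lam * N * Real.exp (k*τ)) ≤ lam * N / k * Real.exp (k*t) := by
    rw [intervalIntegral.integral_const_mul, integral_exp_mul (ne_of_gt hk)]
    have h1 : (Real.exp (k*t) - Real.exp (k*0))/k ≤ Real.exp (k*t)/k := by
      gcongr
      have := Real.exp_pos (k*0); linarith
    calc lam * N * ((Real.exp (k*t) - Real.exp (k*0))/k)
        ≤ lam * N * (Real.exp (k*t)/k) := mul_le_mul_of_nonneg_left h1 (by positivity)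
    _ = lam * N / k * Real.exp (k*t) := by ring
  calc |abs (prim G₁ t) - abs (prim G₂ t)| ≤ |prim G₁ t - prim G₂ t| := step1
  _ = |∫ τ in (0:ℝ)..t, (G₁ τ - G₂ τ)| := by rw [step2]
  _ ≤ ∫ τ in (0:ℝ)..t, |G₁ τ - G₂ τ| := step3
  _ ≤ ∫ τ in (0:ℝ)..t, lam * N * Real.exp (k*τ) := step4
  _ ≤ lam * N / k * Real.exp (k*t) := step5

lemma piFacts (a δ β q gs : ℝ) (ha : 0 < a) (hδ : 0 < δ) (hβ : 0 < β) (hq : 0 < q)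
    (hgs : 0 ≤ gs) (D πc : ℝ → ℝ) (hD : Continuous D) (hDnn : ∀ t, 0 ≤ D t)
    (hDgs : ∀ t ≥ (0:ℝ), D t ≤ gs * t)
    (hπc : ContinuousOn πc (Set.Ici 0)) (hπnn : ∀ t ≥ (0:ℝ), 0 ≤ πc t)
    (hint : ∀ t ≥ (0:ℝ), IntegrableOn
      (fun η => Real.exp (-(∫ τ in t..η, (2*a+δ+β*πc τ))) * (D η + q)) (Set.Ioi t))
    (heq : ∀ t ≥ (0:ℝ), πc t = ∫ η in Set.Ioi t,
      Real.exp (-(∫ τ in t..η, (2*a+δ+β*πc τ))) * (D η + q)) :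
    ∃ Pf : ℝ → ℝ, (∀ t ≥ (0:ℝ), Pf t = πc t) ∧
      (∀ t : ℝ, HasDerivAt Pf ((2*a+δ+β*πc (max t 0)) * Pf t - (D t + q)) t) ∧
      (∀ T ≥ (0:ℝ), πc T ≤ (gs/(a+δ/2) + q)/(a+δ/2) * Real.exp ((a+δ/2)*T)) := by
  have hc2pos : (0:ℝ) < 2*a+δ := by linarith
  have hpc : Continuous (fun τ : ℝ => πc (max τ 0)) := cont_ext hπc
  have hpnn : ∀ τ, 0 ≤ πc (max τ 0) := fun τ => hπnn _ (le_max_right _ _)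
  set h := fun τ : ℝ => 2*a+δ + β * πc (max τ 0) with hh
  have hhc : Continuous h := continuous_const.add (continuous_const.mul hpc)
  have hhge : ∀ τ, 2*a+δ ≤ h τ := fun τ =>
    le_add_of_nonneg_right (mul_nonneg hβ.le (hpnn τ))
  set H := prim h with hHdef
  have hHd : ∀ t, HasDerivAt H (h t) t := prim_hasDerivAt hhc
  have hHc : Continuous H := prim_continuous hhc
  have key1 : ∀ t η : ℝ, 0 ≤ t → 0 ≤ η → (∫ τ in t..η, (2*a+δ+β*πc τ)) = H η - H t := by
    intro t η ht hη
    have e1 : Set.EqOn (fun τ => 2*a+δ+β*πc τ) h (Set.uIcc t η) := by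
      intro τ hτ
      have hτ0 : (0:ℝ) ≤ τ := le_trans (le_min ht hη) hτ.1
      simp only [hh, max_eq_left hτ0]
    rw [intervalIntegral.integral_congr e1, integral_eq_prim_sub hhc]
  set F := fun η => D η + q with hF
  have hFc : Continuous F := hD.add continuous_const
  have hFpos : ∀ η, 0 < F η := fun η => by have := hDnn η; simp only [hF]; linarith
  have keyInt : ∀ t ≥ (0:ℝ), IntegrableOn (fun η => Real.exp (-H η) * F η) (Set.Ioi t) := by
    intro t ht
    have h0 : IntegrableOn (fun η => Real.exp (-H t) *
        (Real.exp (-(∫ τ in t..η, (2*a+δ+β*πc τ))) * (D η + q))) (Set.Ioi t) :=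
      (hint t ht).const_mul _
    refine h0.congr_fun (fun η hη => ?_) measurableSet_Ioi
    have hη0 : (0:ℝ) ≤ η := le_trans ht (le_of_lt hη)
    beta_reduce
    rw [key1 t η ht hη0, ← mul_assoc, ← Real.exp_add,
      (by ring : -H t + -(H η - H t) = -H η)]
  have key2 : ∀ t ≥ (0:ℝ), πc t = Real.exp (H t) * ∫ η in Set.Ioi t,
      Real.exp (-H η) * F η := by
    intro t ht
    rw [heq t ht, ← MeasureTheory.integral_const_mul]
    refine setIntegral_congr_fun measurableSet_Ioi (fun η hη => ?_)
    have hη0 : (0:ℝ) ≤ η := le_trans ht (le_of_lt hη)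
    rw [key1 t η ht hη0, ← mul_assoc, ← Real.exp_add,
      (by ring : -(H η - H t) = H t + -H η)]
  set JJ := fun t => ∫ η in Set.Ioi t, Real.exp (-H η) * F η with hJJ
  have key3 : ∀ t ≥ (0:ℝ), JJ t = JJ 0 - prim (fun η => Real.exp (-H η) * F η) t := by
    intro t ht
    have hsplit : JJ 0 = (∫ η in Set.Ioc 0 t, Real.exp (-H η) * F η) + JJ t := by
      rw [hJJ]
      rw [← MeasureTheory.setIntegral_union (Set.Ioc_disjoint_Ioi le_rfl) measurableSet_Ioi
        ((keyInt 0 le_rfl).mono_set Set.Ioc_subset_Ioi_self) (keyInt t ht),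
        Set.Ioc_union_Ioi_eq_Ioi ht]
    have hprim : prim (fun η => Real.exp (-H η) * F η) t
        = ∫ η in Set.Ioc 0 t, Real.exp (-H η) * F η := by
      rw [prim, intervalIntegral.integral_of_le ht]
    rw [hprim]; linarith
  have hGc : Continuous (fun η => Real.exp (-H η) * F η) :=
    ((hHc.neg).rexp.mul hFc)
  refine ⟨fun t => Real.exp (H t) * (JJ 0 - prim (fun η => Real.exp (-H η) * F η) t),
    fun t ht => ?_, fun t => ?_, fun T hT => ?_⟩
  · show Real.exp (H t) * (JJ 0 - prim (fun η => Real.exp (-H η) * F η) t) = πc t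
    rw [← key3 t ht]; exact (key2 t ht).symm
  · have d1 : HasDerivAt (fun u => Real.exp (H u)) (Real.exp (H t) * h t) t := (hHd t).exp
    have d2 : HasDerivAt (fun u => JJ 0 - prim (fun η => Real.exp (-H η) * F η) u)
        (-(Real.exp (-H t) * F t)) t := (prim_hasDerivAt hGc t).const_sub (JJ 0)
    have d3 := d1.mul d2
    have hexp1 : Real.exp (H t) * Real.exp (-H t) = 1 := by
      rw [← Real.exp_add]; simp
    refine d3.congr_deriv ?_
    symm
    simp only [hh, hF]
    linear_combination (D t + q) * hexp1
  · obtain ⟨μ2, hμ2def⟩ : ∃ μ2 : ℝ, μ2 = a + δ/2 := ⟨_, rfl⟩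
    rw [← hμ2def]
    have hμ2 : 0 < μ2 := by rw [hμ2def]; linarith
    have hdom : ∀ η ∈ Set.Ioi T, Real.exp (-H η) * F η ≤
        (Real.exp (-H T) * ((gs/μ2 + q) * Real.exp (μ2*T))) * Real.exp (-(μ2 * (η - T))) := by
      intro η hη
      have hηT : T ≤ η := le_of_lt hη
      have hη0 : (0:ℝ) ≤ η := le_trans hT hηT
      have h1 : (2*a+δ)*(η-T) ≤ H η - H T :=
        prim_lower hhc hηT (fun u _ => hhge u)
      have hexpd : Real.exp (-H η) ≤ Real.exp (-H T) * Real.exp (-((2*a+δ)*(η-T))) := by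
        rw [← Real.exp_add]
        exact Real.exp_le_exp.2 (by linarith)
      have hFb : F η ≤ (gs/μ2 + q) * Real.exp (μ2*η) := by
        have hb1 : D η + q ≤ gs*η + q := by have := hDgs η hη0; linarith
        have hb2 : μ2*η + 1 ≤ Real.exp (μ2*η) := Real.add_one_le_exp _
        have hb3 : (1:ℝ) ≤ Real.exp (μ2*η) := Real.one_le_exp (by positivity)
        have hb4 : η ≤ Real.exp (μ2*η) / μ2 := by
          rw [le_div_iff₀ hμ2]; nlinarith
        have : gs*η + q ≤ gs*(Real.exp (μ2*η)/μ2) + q*Real.exp (μ2*η) := by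
          have := mul_le_mul_of_nonneg_left hb4 hgs
          nlinarith
        calc F η ≤ gs*η + q := hb1
        _ ≤ gs*(Real.exp (μ2*η)/μ2) + q*Real.exp (μ2*η) := this
        _ = (gs/μ2 + q) * Real.exp (μ2*η) := by ring
      have hFnn : 0 ≤ F η := (hFpos η).le
      have step : Real.exp (-H η) * F η ≤
          (Real.exp (-H T) * Real.exp (-((2*a+δ)*(η-T)))) * ((gs/μ2 + q) * Real.exp (μ2*η)) := by
        apply mul_le_mul hexpd hFb hFnn (by positivity)
      refine step.trans (le_of_eq ?_)
      have hee : Real.exp (-(μ2*(η - T))) * Real.exp (μ2*T)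
          = Real.exp (-((2*a+δ)*(η-T))) * Real.exp (μ2*η) := by
        rw [← Real.exp_add, ← Real.exp_add]; congr 1; rw [hμ2def]; ring
      linear_combination (-((gs/μ2 + q) * Real.exp (-H T))) * hee
    have hle : JJ T ≤ (Real.exp (-H T) * ((gs/μ2 + q) * Real.exp (μ2*T))) * (1/μ2) := by
      have hmono := setIntegral_mono_on (keyInt T hT)
        ((expdecay_integrableOn hμ2 T).const_mul _) measurableSet_Ioi hdom
      calc JJ T ≤ ∫ η in Set.Ioi T, (Real.exp (-H T) * ((gs/μ2 + q) * Real.exp (μ2*T))) *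
          Real.exp (-(μ2 * (η - T))) := hmono
      _ = (Real.exp (-H T) * ((gs/μ2 + q) * Real.exp (μ2*T))) *
          ∫ η in Set.Ioi T, Real.exp (-(μ2 * (η - T))) := MeasureTheory.integral_const_mul _ _
      _ = _ := by rw [expdecay_integral hμ2]
    have hπT : πc T = Real.exp (H T) * JJ T := key2 T hT
    have hexp1 : Real.exp (H T) * Real.exp (-H T) = 1 := by rw [← Real.exp_add]; simp
    calc πc T = Real.exp (H T) * JJ T := hπT
    _ ≤ Real.exp (H T) * ((Real.exp (-H T) * ((gs/μ2 + q) * Real.exp (μ2*T))) * (1/μ2)) :=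
        mul_le_mul_of_nonneg_left hle (Real.exp_pos _).le
    _ = (gs/μ2 + q)/μ2 * Real.exp (μ2*T) := by
        rw [show Real.exp (H T) * ((Real.exp (-H T) * ((gs/μ2 + q) * Real.exp (μ2*T))) * (1/μ2))
            = (Real.exp (H T) * Real.exp (-H T)) * ((gs/μ2 + q)/μ2 * Real.exp (μ2*T)) by ring,
          hexp1, one_mul]


set_option maxHeartbeats 2000000 in
lemma piStab (a δ β q gs k ε : ℝ) (ha : 0 < a) (hδ : 0 < δ) (hβ : 0 < β) (hq : 0 < q)
    (hgs : 0 ≤ gs) (hk : 0 < k) (hk2 : k < 2*a+δ) (hε : 0 ≤ ε)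
    (D₁ D₂ π₁ π₂ : ℝ → ℝ)
    (hD₁ : Continuous D₁) (hD₁nn : ∀ t, 0 ≤ D₁ t) (hD₁gs : ∀ t ≥ (0:ℝ), D₁ t ≤ gs * t)
    (hD₂ : Continuous D₂) (hD₂nn : ∀ t, 0 ≤ D₂ t) (hD₂gs : ∀ t ≥ (0:ℝ), D₂ t ≤ gs * t)
    (hπ₁c : ContinuousOn π₁ (Set.Ici 0)) (hπ₁nn : ∀ t ≥ (0:ℝ), 0 ≤ π₁ t)
    (hint₁ : ∀ t ≥ (0:ℝ), IntegrableOn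
      (fun η => Real.exp (-(∫ τ in t..η, (2*a+δ+β*π₁ τ))) * (D₁ η + q)) (Set.Ioi t))
    (heq₁ : ∀ t ≥ (0:ℝ), π₁ t = ∫ η in Set.Ioi t,
      Real.exp (-(∫ τ in t..η, (2*a+δ+β*π₁ τ))) * (D₁ η + q))
    (hπ₂c : ContinuousOn π₂ (Set.Ici 0)) (hπ₂nn : ∀ t ≥ (0:ℝ), 0 ≤ π₂ t)
    (hint₂ : ∀ t ≥ (0:ℝ), IntegrableOn
      (fun η => Real.exp (-(∫ τ in t..η, (2*a+δ+β*π₂ τ))) * (D₂ η + q)) (Set.Ioi t))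
    (heq₂ : ∀ t ≥ (0:ℝ), π₂ t = ∫ η in Set.Ioi t,
      Real.exp (-(∫ τ in t..η, (2*a+δ+β*π₂ τ))) * (D₂ η + q))
    (hdF : ∀ η ≥ (0:ℝ), |D₁ η - D₂ η| ≤ ε * Real.exp (k*η)) :
    ∀ t ≥ (0:ℝ), |π₁ t - π₂ t| ≤ ε/(2*a+δ-k) * Real.exp (k*t) := by
  obtain ⟨P₁, hP₁eq, hP₁d, hgrow₁⟩ :=
    piFacts a δ β q gs ha hδ hβ hq hgs D₁ π₁ hD₁ hD₁nn hD₁gs hπ₁c hπ₁nn hint₁ heq₁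
  obtain ⟨P₂, hP₂eq, hP₂d, hgrow₂⟩ :=
    piFacts a δ β q gs ha hδ hβ hq hgs D₂ π₂ hD₂ hD₂nn hD₂gs hπ₂c hπ₂nn hint₂ heq₂
  intro t ht
  have hck : 0 < 2*a+δ-k := by linarith
  set κ := fun τ : ℝ => (2*a+δ) + β*π₁ (max τ 0) + β*π₂ (max τ 0) with hκ
  have hκc : Continuous κ :=
    (continuous_const.add (continuous_const.mul (cont_ext hπ₁c))).add
      (continuous_const.mul (cont_ext hπ₂c))
  have hκge : ∀ τ, 2*a+δ ≤ κ τ := by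
    intro τ
    have h1 := hπ₁nn _ (le_max_right τ 0)
    have h2 := hπ₂nn _ (le_max_right τ 0)
    have b1 : 0 ≤ β*π₁ (max τ 0) := mul_nonneg hβ.le h1
    have b2 : 0 ≤ β*π₂ (max τ 0) := mul_nonneg hβ.le h2
    simp only [hκ]; linarith
  set K := prim κ with hK
  have hKd : ∀ u, HasDerivAt K (κ u) u := prim_hasDerivAt hκc
  have hVd : ∀ u, 0 ≤ u → HasDerivAt (fun v => Real.exp (-K v) * (P₁ v - P₂ v))
      (-(Real.exp (-K u) * (D₁ u - D₂ u))) u := by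
    intro u hu
    have d1 : HasDerivAt (fun v => Real.exp (-K v)) (Real.exp (-K u) * -κ u) u :=
      ((hKd u).neg).exp
    have d2 := (hP₁d u).sub (hP₂d u)
    have d3 := d1.mul d2
    refine d3.congr_deriv ?_
    symm
    have e1 : π₁ (max u 0) = P₁ u := by rw [max_eq_left hu]; exact (hP₁eq u hu).symm
    have e2 : π₂ (max u 0) = P₂ u := by rw [max_eq_left hu]; exact (hP₂eq u hu).symm
    simp only [hκ, e1, e2, Pi.sub_apply]
    ring
  have hVint : ∀ T, t ≤ T → Real.exp (-K t) * (P₁ t - P₂ t)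
      = Real.exp (-K T) * (P₁ T - P₂ T) + ∫ u in t..T, Real.exp (-K u) * (D₁ u - D₂ u) := by
    intro T hT
    have hd : ∀ u ∈ Set.uIcc t T, HasDerivAt (fun v => Real.exp (-K v) * (P₁ v - P₂ v))
        (-(Real.exp (-K u) * (D₁ u - D₂ u))) u := by
      intro u hu
      rw [Set.uIcc_of_le hT] at hu
      exact hVd u (le_trans ht hu.1)
    have hcont : Continuous (fun u => -(Real.exp (-K u) * (D₁ u - D₂ u))) :=
      (((prim_continuous hκc).neg.rexp).mul (hD₁.sub hD₂)).neg
    have hfund := intervalIntegral.integral_eq_sub_of_hasDerivAt hd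
      (hcont.intervalIntegrable _ _)
    rw [intervalIntegral.integral_neg] at hfund
    linarith
  have hKdiff : ∀ u, t ≤ u → (2*a+δ)*(u - t) ≤ K u - K t := fun u hu =>
    prim_lower hκc hu (fun v _ => hκge v)
  have main : ∀ T, t ≤ T → |π₁ t - π₂ t| ≤
      (2*((gs/(a+δ/2) + q)/(a+δ/2))*Real.exp ((2*a+δ)*t)) * Real.exp (-((a+δ/2)*T))
      + ε/(2*a+δ-k) * Real.exp (k*t) := by
    intro T hT
    have hT0 : (0:ℝ) ≤ T := le_trans ht hT
    have eP : π₁ t - π₂ t = P₁ t - P₂ t := by rw [hP₁eq t ht, hP₂eq t ht]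
    have e0 : P₁ t - P₂ t = Real.exp (K t) * (Real.exp (-K T) * (P₁ T - P₂ T))
        + Real.exp (K t) * ∫ u in t..T, Real.exp (-K u) * (D₁ u - D₂ u) := by
      have h1 : Real.exp (K t) * (Real.exp (-K t) * (P₁ t - P₂ t)) = P₁ t - P₂ t := by
        rw [← mul_assoc, ← Real.exp_add]; simp
      rw [← h1, hVint T hT]; ring
    have b1 : |Real.exp (K t) * (Real.exp (-K T) * (P₁ T - P₂ T))| ≤
        (2*((gs/(a+δ/2) + q)/(a+δ/2))*Real.exp ((2*a+δ)*t)) * Real.exp (-((a+δ/2)*T)) := by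
      have hPT : |P₁ T - P₂ T| ≤ 2*((gs/(a+δ/2) + q)/(a+δ/2))*Real.exp ((a+δ/2)*T) := by
        rw [hP₁eq T hT0, hP₂eq T hT0]
        have g1 := hgrow₁ T hT0
        have g2 := hgrow₂ T hT0
        have n1 := hπ₁nn T hT0
        have n2 := hπ₂nn T hT0
        have habs : |π₁ T - π₂ T| ≤ π₁ T + π₂ T := abs_le.2 ⟨by linarith, by linarith⟩
        linarith
      have hexpKT : Real.exp (K t) * Real.exp (-K T) ≤ Real.exp (-((2*a+δ)*(T - t))) := by
        have := hKdiff T hT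
        rw [← Real.exp_add]; exact Real.exp_le_exp.2 (by linarith)
      have step := mul_le_mul hexpKT hPT (abs_nonneg _) (Real.exp_pos _).le
      have ee : Real.exp (-((2*a+δ)*(T - t))) * (2*((gs/(a+δ/2) + q)/(a+δ/2))*Real.exp ((a+δ/2)*T))
          = (2*((gs/(a+δ/2) + q)/(a+δ/2))*Real.exp ((2*a+δ)*t)) * Real.exp (-((a+δ/2)*T)) := by
        rw [show (2*((gs/(a+δ/2) + q)/(a+δ/2))*Real.exp ((2*a+δ)*t)) * Real.exp (-((a+δ/2)*T))
            = (Real.exp ((2*a+δ)*t) * Real.exp (-((a+δ/2)*T))) * (2*((gs/(a+δ/2) + q)/(a+δ/2))) by ring,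
          show Real.exp (-((2*a+δ)*(T - t))) * (2*((gs/(a+δ/2) + q)/(a+δ/2))*Real.exp ((a+δ/2)*T))
            = (Real.exp (-((2*a+δ)*(T - t))) * Real.exp ((a+δ/2)*T)) * (2*((gs/(a+δ/2) + q)/(a+δ/2))) by ring,
          ← Real.exp_add, ← Real.exp_add]
        congr 2
        ring
      calc |Real.exp (K t) * (Real.exp (-K T) * (P₁ T - P₂ T))|
          = Real.exp (K t) * Real.exp (-K T) * |P₁ T - P₂ T| := by
            rw [abs_mul, abs_mul, abs_of_nonneg (Real.exp_pos _).le,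
              abs_of_nonneg (Real.exp_pos _).le, mul_assoc]
      _ ≤ Real.exp (-((2*a+δ)*(T - t))) * (2*((gs/(a+δ/2) + q)/(a+δ/2))*Real.exp ((a+δ/2)*T)) := step
      _ = _ := ee
    have b2 : |Real.exp (K t) * ∫ u in t..T, Real.exp (-K u) * (D₁ u - D₂ u)|
        ≤ ε/(2*a+δ-k) * Real.exp (k*t) := by
      rw [abs_mul, abs_of_nonneg (Real.exp_pos _).le]
      have i1 : |∫ u in t..T, Real.exp (-K u) * (D₁ u - D₂ u)|
          ≤ ∫ u in t..T, |Real.exp (-K u) * (D₁ u - D₂ u)| :=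
        intervalIntegral.abs_integral_le_integral_abs hT
      have i2 : (∫ u in t..T, |Real.exp (-K u) * (D₁ u - D₂ u)|)
          ≤ ∫ u in t..T, (Real.exp (-K t) * (ε * Real.exp (k*t))) *
              Real.exp (-((2*a+δ-k)*(u - t))) := by
        refine intervalIntegral.integral_mono_on (μ := volume) hT
          (((((prim_continuous hκc).neg.rexp).mul (hD₁.sub hD₂)).abs).intervalIntegrable _ _)
          ((continuous_const.mul ((Real.continuous_exp.comp
            ((continuous_const.mul (continuous_id.sub continuous_const)).neg)))).intervalIntegrable _ _)
          (fun u hu => ?_)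
        have hu0 : (0:ℝ) ≤ u := le_trans ht hu.1
        have hKu : Real.exp (-K u) ≤ Real.exp (-K t) * Real.exp (-((2*a+δ)*(u - t))) := by
          have := hKdiff u hu.1
          rw [← Real.exp_add]; exact Real.exp_le_exp.2 (by linarith)
        have hdFu := hdF u hu0
        have step1 : |Real.exp (-K u) * (D₁ u - D₂ u)| = Real.exp (-K u) * |D₁ u - D₂ u| := by
          rw [abs_mul, abs_of_nonneg (Real.exp_pos _).le]
        rw [step1]
        have step2 : Real.exp (-K u) * |D₁ u - D₂ u| ≤
            (Real.exp (-K t) * Real.exp (-((2*a+δ)*(u - t)))) * (ε * Real.exp (k*u)) :=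
          mul_le_mul hKu hdFu (abs_nonneg _) (by positivity)
        refine step2.trans (le_of_eq ?_)
        have hee : Real.exp (-((2*a+δ)*(u - t))) * Real.exp (k*u)
            = Real.exp (k*t) * Real.exp (-((2*a+δ-k)*(u - t))) := by
          rw [← Real.exp_add, ← Real.exp_add]; congr 1; ring
        linear_combination (Real.exp (-K t) * ε) * hee
      have i3 : (∫ u in t..T, (Real.exp (-K t) * (ε * Real.exp (k*t))) *
          Real.exp (-((2*a+δ-k)*(u - t))))
          ≤ (Real.exp (-K t) * (ε * Real.exp (k*t))) * (1/(2*a+δ-k)) := by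
        rw [intervalIntegral.integral_const_mul]
        exact mul_le_mul_of_nonneg_left (expdecay_intervalIntegral_le hck hT) (by positivity)
      have hfin : Real.exp (K t) * ((Real.exp (-K t) * (ε * Real.exp (k*t))) * (1/(2*a+δ-k)))
          = ε/(2*a+δ-k) * Real.exp (k*t) := by
        rw [show Real.exp (K t) * ((Real.exp (-K t) * (ε * Real.exp (k*t))) * (1/(2*a+δ-k)))
            = (Real.exp (K t) * Real.exp (-K t)) * (ε/(2*a+δ-k) * Real.exp (k*t)) by ring,
          ← Real.exp_add]
        simp
      calc Real.exp (K t) * |∫ u in t..T, Real.exp (-K u) * (D₁ u - D₂ u)|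
          ≤ Real.exp (K t) * ((Real.exp (-K t) * (ε * Real.exp (k*t))) * (1/(2*a+δ-k))) :=
            mul_le_mul_of_nonneg_left (le_trans i1 (le_trans i2 i3)) (Real.exp_pos _).le
      _ = ε/(2*a+δ-k) * Real.exp (k*t) := hfin
    calc |π₁ t - π₂ t| = |P₁ t - P₂ t| := by rw [eP]
    _ ≤ |Real.exp (K t) * (Real.exp (-K T) * (P₁ T - P₂ T))|
        + |Real.exp (K t) * ∫ u in t..T, Real.exp (-K u) * (D₁ u - D₂ u)| := by
          rw [e0]; exact abs_add_le _ _
    _ ≤ _ := add_le_add b1 b2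
  have htend : Filter.Tendsto (fun T =>
      (2*((gs/(a+δ/2) + q)/(a+δ/2))*Real.exp ((2*a+δ)*t)) * Real.exp (-((a+δ/2)*T))
      + ε/(2*a+δ-k) * Real.exp (k*t)) Filter.atTop
      (nhds ((2*((gs/(a+δ/2) + q)/(a+δ/2))*Real.exp ((2*a+δ)*t)) * 0
        + ε/(2*a+δ-k) * Real.exp (k*t))) := by
    have hμ2 : (0:ℝ) < a+δ/2 := by linarith
    have h1 : Filter.Tendsto (fun T : ℝ => (a+δ/2)*T) Filter.atTop Filter.atTop :=
      Filter.Tendsto.const_mul_atTop hμ2 Filter.tendsto_id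
    have h2 : Filter.Tendsto (fun T : ℝ => Real.exp (-((a+δ/2)*T))) Filter.atTop (nhds 0) :=
      Real.tendsto_exp_neg_atTop_nhds_zero.comp h1
    exact (h2.const_mul _).add_const _
  have hfinal := ge_of_tendsto htend
    (Filter.eventually_atTop.2 ⟨t, fun T hT => main T hT⟩)
  calc |π₁ t - π₂ t| ≤ _ := hfinal
  _ = ε/(2*a+δ-k) * Real.exp (k*t) := by ring

set_option maxHeartbeats 2000000 in
lemma assemble (a δ β q k W z xbar0 : ℝ)
    (ha : 0 < a) (hδ : 0 < δ) (hβ : 0 < β) (hq : 0 < q) (hk : 0 < k) (hka : k < a+δ)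
    (hW : 0 ≤ W) (hzx : z < xbar0)
    (π₁ π₂ : ℝ → ℝ)
    (hπ₁c : ContinuousOn π₁ (Set.Ici 0)) (hπ₁nn : ∀ t ≥ (0:ℝ), 0 ≤ π₁ t)
    (hπ₂c : ContinuousOn π₂ (Set.Ici 0)) (hπ₂nn : ∀ t ≥ (0:ℝ), 0 ≤ π₂ t)
    (hw : ∀ τ ≥ (0:ℝ), |π₁ τ - π₂ τ| ≤ W * Real.exp (k*τ))
    {t : ℝ} (ht : 0 ≤ t) :
    Real.exp (-k*t) * |(z + phiF a β π₁ t 0 * (xbar0 - z) +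
        (β*q + a^2 + a*δ) * (xbar0 - z) *
          ∫ η in (0:ℝ)..t, phiF a β π₁ t η * (∫ τ in Set.Ioi η, psiF a δ β π₁ τ η)) -
      (z + phiF a β π₂ t 0 * (xbar0 - z) +
        (β*q + a^2 + a*δ) * (xbar0 - z) *
          ∫ η in (0:ℝ)..t, phiF a β π₂ t η * (∫ τ in Set.Ioi η, psiF a δ β π₂ τ η))|
      ≤ W * (β*(xbar0 - z)/k +
          (β*q + a^2 + a*δ)*(xbar0 - z)*(β/k)*(1/(a+δ) + 1/(a+δ-k))*(1/a)) := by
  have haδ : (0:ℝ) < a+δ := by linarith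
  have haδk : (0:ℝ) < a+δ-k := by linarith
  -- interval integrability of π's on nonneg intervals
  have hsub : ∀ {s u : ℝ}, 0 ≤ s → 0 ≤ u → Set.uIcc s u ⊆ Set.Ici (0:ℝ) := by
    intro s u hs hu x hx
    exact le_trans (le_min hs hu) hx.1
  have hii₁ : ∀ {s u : ℝ}, 0 ≤ s → 0 ≤ u → IntervalIntegrable π₁ volume s u :=
    fun hs hu => (hπ₁c.mono (hsub hs hu)).intervalIntegrable
  have hii₂ : ∀ {s u : ℝ}, 0 ≤ s → 0 ≤ u → IntervalIntegrable π₂ volume s u :=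
    fun hs hu => (hπ₂c.mono (hsub hs hu)).intervalIntegrable
  -- the w-integral bound
  have hwint : ∀ {s u : ℝ}, 0 ≤ s → s ≤ u →
      |∫ τ in s..u, (π₁ τ - π₂ τ)| ≤ W * Real.exp (k*u) / k := by
    intro s u hs hsu
    have hu : (0:ℝ) ≤ u := le_trans hs hsu
    have i1 : |∫ τ in s..u, (π₁ τ - π₂ τ)| ≤ ∫ τ in s..u, |π₁ τ - π₂ τ| :=
      intervalIntegral.abs_integral_le_integral_abs hsu
    have i2 : (∫ τ in s..u, |π₁ τ - π₂ τ|) ≤ ∫ τ in s..u, W * Real.exp (k*τ) := by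
      refine intervalIntegral.integral_mono_on (μ := volume) hsu
        (((hii₁ hs hu).sub (hii₂ hs hu)).abs)
        ((continuous_const.mul (Real.continuous_exp.comp
          (continuous_const.mul continuous_id))).intervalIntegrable _ _)
        (fun τ hτ => hw τ (le_trans hs hτ.1))
    have i3 : (∫ τ in s..u, W * Real.exp (k*τ)) ≤ W * Real.exp (k*u) / k := by
      rw [intervalIntegral.integral_const_mul, integral_exp_mul (ne_of_gt hk)]
      have h1 : (Real.exp (k*u) - Real.exp (k*s))/k ≤ Real.exp (k*u)/k := by
        gcongr
        have := Real.exp_pos (k*s); linarith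
      calc W * ((Real.exp (k*u) - Real.exp (k*s))/k) ≤ W * (Real.exp (k*u)/k) :=
        mul_le_mul_of_nonneg_left h1 hW
      _ = W * Real.exp (k*u) / k := by ring
    exact le_trans i1 (le_trans i2 i3)
  -- phi difference and bound
  have phi_exp : ∀ (p : ℝ → ℝ), ContinuousOn p (Set.Ici 0) → (∀ τ ≥ (0:ℝ), 0 ≤ p τ) →
      ∀ {η t' : ℝ}, 0 ≤ η → η ≤ t' → a*(t'-η) ≤ ∫ τ in η..t', (a + β*p τ) := by
    intro p hpc hpnn η t' hη hηt
    have ht' : (0:ℝ) ≤ t' := le_trans hη hηt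
    have h0 : ∫ τ in η..t', (fun _ => a) τ ≤ ∫ τ in η..t', (a + β*p τ) := by
      refine intervalIntegral.integral_mono_on (μ := volume) hηt
        intervalIntegrable_const
        (((continuous_const : Continuous (fun _:ℝ => a)).continuousOn).add
          ((continuousOn_const.mul (hpc.mono (hsub hη ht'))).mono
            (subset_refl _)) |>.intervalIntegrable)
        (fun τ hτ => le_add_of_nonneg_right
          (mul_nonneg hβ.le (hpnn τ (le_trans hη hτ.1))))
    simpa [mul_comm] using h0
  have phi_diff : ∀ {η t' : ℝ}, 0 ≤ η → η ≤ t' →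
      |phiF a β π₁ t' η - phiF a β π₂ t' η| ≤
        Real.exp (-(a*(t'-η))) * (β * (W * Real.exp (k*t') / k)) := by
    intro η t' hη hηt
    have ht' : (0:ℝ) ≤ t' := le_trans hη hηt
    have hu1 : a*(t'-η) ≤ ∫ τ in η..t', (a + β*π₁ τ) := phi_exp π₁ hπ₁c hπ₁nn hη hηt
    have hu2 : a*(t'-η) ≤ ∫ τ in η..t', (a + β*π₂ τ) := phi_exp π₂ hπ₂c hπ₂nn hη hηt
    have hudiff : (∫ τ in η..t', (a + β*π₁ τ)) - (∫ τ in η..t', (a + β*π₂ τ))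
        = β * ∫ τ in η..t', (π₁ τ - π₂ τ) := by
      rw [← intervalIntegral.integral_sub
        ((intervalIntegrable_const (μ := volume)).add ((hii₁ hη ht').const_mul β))
        ((intervalIntegrable_const (μ := volume)).add ((hii₂ hη ht').const_mul β)),
        ← intervalIntegral.integral_const_mul]
      congr 1
      funext τ
      ring
    have habs := abs_exp_neg_sub_exp_neg hu1 hu2
    calc |phiF a β π₁ t' η - phiF a β π₂ t' η|
        ≤ Real.exp (-(a*(t'-η))) * |(∫ τ in η..t', (a + β*π₁ τ)) - ∫ τ in η..t', (a + β*π₂ τ)| := habs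
    _ = Real.exp (-(a*(t'-η))) * (β * |∫ τ in η..t', (π₁ τ - π₂ τ)|) := by
        rw [hudiff, abs_mul, abs_of_nonneg hβ.le]
    _ ≤ Real.exp (-(a*(t'-η))) * (β * (W * Real.exp (k*t') / k)) := by
        refine mul_le_mul_of_nonneg_left (mul_le_mul_of_nonneg_left ?_ hβ.le) (Real.exp_pos _).le
        exact hwint hη hηt
  have phi_bound : ∀ (p : ℝ → ℝ), ContinuousOn p (Set.Ici 0) → (∀ τ ≥ (0:ℝ), 0 ≤ p τ) →
      ∀ {η t' : ℝ}, 0 ≤ η → η ≤ t' → phiF a β p t' η ≤ Real.exp (-(a*(t'-η))) := by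
    intro p hpc hpnn η t' hη hηt
    exact Real.exp_le_exp.2 (by have := phi_exp p hpc hpnn hη hηt; linarith)
  -- psi machinery
  have haδnn : ∀ (p : ℝ → ℝ), (∀ τ ≥ (0:ℝ), 0 ≤ p τ) → ∀ τ : ℝ, a + δ ≤ a + δ + β * p (max τ 0) :=
    fun p hp τ => le_add_of_nonneg_right (mul_nonneg hβ.le (hp _ (le_max_right _ _)))
  -- generic facts for each component
  have main2 : ∀ (p : ℝ → ℝ), ContinuousOn p (Set.Ici 0) → (∀ τ ≥ (0:ℝ), 0 ≤ p τ) →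
      ∃ P : ℝ → ℝ, Continuous P ∧
        (∀ {s u : ℝ}, 0 ≤ s → 0 ≤ u → (∫ τ in s..u, (a+δ+β*p τ)) = P u - P s) ∧
        (∀ {s u : ℝ}, 0 ≤ s → s ≤ u → (a+δ)*(u-s) ≤ P u - P s) := by
    intro p hpc hpnn
    have hec : Continuous (fun τ : ℝ => a + δ + β * p (max τ 0)) :=
      continuous_const.add (continuous_const.mul (cont_ext hpc))
    refine ⟨prim (fun τ => a + δ + β * p (max τ 0)), prim_continuous hec, ?_, ?_⟩
    · intro s u hs hu
      have e1 : Set.EqOn (fun τ => a+δ+β*p τ) (fun τ => a + δ + β * p (max τ 0))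
          (Set.uIcc s u) := by
        intro τ hτ
        have hτ0 : (0:ℝ) ≤ τ := le_trans (le_min hs hu) hτ.1
        simp [max_eq_left hτ0]
      rw [intervalIntegral.integral_congr e1, integral_eq_prim_sub hec]
    · intro s u hs hsu
      exact prim_lower hec hsu (fun v _ => haδnn p hpnn v)
  obtain ⟨P₁, hP₁c, keyP₁, lowP₁⟩ := main2 π₁ hπ₁c hπ₁nn
  obtain ⟨P₂, hP₂c, keyP₂, lowP₂⟩ := main2 π₂ hπ₂c hπ₂nn
  have psi_eq₁ : ∀ {η τ : ℝ}, 0 ≤ η → 0 ≤ τ →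
      psiF a δ β π₁ τ η = Real.exp (P₁ η - P₁ τ) := by
    intro η τ hη hτ
    show Real.exp _ = _
    rw [keyP₁ hη hτ]; congr 1; ring
  have psi_eq₂ : ∀ {η τ : ℝ}, 0 ≤ η → 0 ≤ τ →
      psiF a δ β π₂ τ η = Real.exp (P₂ η - P₂ τ) := by
    intro η τ hη hτ
    show Real.exp _ = _
    rw [keyP₂ hη hτ]; congr 1; ring
  -- integrability of exp(-P) on Ioi s
  have intExpP : ∀ (P : ℝ → ℝ), Continuous P →
      (∀ {s u : ℝ}, 0 ≤ s → s ≤ u → (a+δ)*(u-s) ≤ P u - P s) →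
      ∀ {s : ℝ}, 0 ≤ s → IntegrableOn (fun τ => Real.exp (-P τ)) (Set.Ioi s) := by
    intro P hPc lowP s hs
    refine Integrable.mono' ((expdecay_integrableOn haδ s).const_mul (Real.exp (-P s)))
      ((hPc.neg.rexp).aestronglyMeasurable.restrict)
      ((MeasureTheory.ae_restrict_iff' measurableSet_Ioi).2
        (Filter.Eventually.of_forall fun τ hτ => ?_))
    have hlow := lowP hs (le_of_lt hτ)
    rw [Real.norm_eq_abs, abs_of_nonneg (Real.exp_pos _).le, ← Real.exp_add]
    exact Real.exp_le_exp.2 (by linarith)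
  have psi_int₁ : ∀ {η : ℝ}, 0 ≤ η →
      IntegrableOn (fun τ => psiF a δ β π₁ τ η) (Set.Ioi η) := by
    intro η hη
    have h0 : IntegrableOn (fun τ => Real.exp (P₁ η) * Real.exp (-P₁ τ)) (Set.Ioi η) :=
      (intExpP P₁ hP₁c lowP₁ hη).const_mul _
    refine h0.congr_fun (fun τ hτ => ?_) measurableSet_Ioi
    beta_reduce
    rw [psi_eq₁ hη (le_trans hη (le_of_lt hτ)), ← Real.exp_add, sub_eq_add_neg]
  have psi_int₂ : ∀ {η : ℝ}, 0 ≤ η →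
      IntegrableOn (fun τ => psiF a δ β π₂ τ η) (Set.Ioi η) := by
    intro η hη
    have h0 : IntegrableOn (fun τ => Real.exp (P₂ η) * Real.exp (-P₂ τ)) (Set.Ioi η) :=
      (intExpP P₂ hP₂c lowP₂ hη).const_mul _
    refine h0.congr_fun (fun τ hτ => ?_) measurableSet_Ioi
    beta_reduce
    rw [psi_eq₂ hη (le_trans hη (le_of_lt hτ)), ← Real.exp_add, sub_eq_add_neg]
  have psi_pt_bound₁ : ∀ {η τ : ℝ}, 0 ≤ η → η ≤ τ →
      psiF a δ β π₁ τ η ≤ Real.exp (-((a+δ)*(τ-η))) := by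
    intro η τ hη hητ
    rw [psi_eq₁ hη (le_trans hη hητ)]
    exact Real.exp_le_exp.2 (by have := lowP₁ hη hητ; linarith)
  have psi_pt_bound₂ : ∀ {η τ : ℝ}, 0 ≤ η → η ≤ τ →
      psiF a δ β π₂ τ η ≤ Real.exp (-((a+δ)*(τ-η))) := by
    intro η τ hη hητ
    rw [psi_eq₂ hη (le_trans hη hητ)]
    exact Real.exp_le_exp.2 (by have := lowP₂ hη hητ; linarith)
  have Psi_bound₁ : ∀ {η : ℝ}, 0 ≤ η →
      (∫ τ in Set.Ioi η, psiF a δ β π₁ τ η) ≤ 1/(a+δ) := by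
    intro η hη
    have hmono := setIntegral_mono_on (psi_int₁ hη) (expdecay_integrableOn haδ η)
      measurableSet_Ioi (fun τ hτ => psi_pt_bound₁ hη (le_of_lt hτ))
    rwa [expdecay_integral haδ] at hmono
  have Psi_nn₁ : ∀ η : ℝ, 0 ≤ ∫ τ in Set.Ioi η, psiF a δ β π₁ τ η :=
    fun η => setIntegral_nonneg measurableSet_Ioi (fun τ _ => (Real.exp_pos _).le)
  -- psi pointwise difference
  have psi_diff : ∀ {η τ : ℝ}, 0 ≤ η → η ≤ τ →
      |psiF a δ β π₁ τ η - psiF a δ β π₂ τ η| ≤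
        Real.exp (-((a+δ)*(τ-η))) * (β * (W * Real.exp (k*τ) / k)) := by
    intro η τ hη hητ
    have hτ0 : (0:ℝ) ≤ τ := le_trans hη hητ
    have hv1 : (a+δ)*(τ-η) ≤ ∫ σ in η..τ, (a + δ + β*π₁ σ) := by
      have := lowP₁ hη hητ; rw [keyP₁ hη hτ0]; linarith
    have hv2 : (a+δ)*(τ-η) ≤ ∫ σ in η..τ, (a + δ + β*π₂ σ) := by
      have := lowP₂ hη hητ; rw [keyP₂ hη hτ0]; linarith
    have hvdiff : (∫ σ in η..τ, (a + δ + β*π₁ σ)) - (∫ σ in η..τ, (a + δ + β*π₂ σ))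
        = β * ∫ σ in η..τ, (π₁ σ - π₂ σ) := by
      rw [← intervalIntegral.integral_sub
        ((intervalIntegrable_const (μ := volume)).add ((hii₁ hη hτ0).const_mul β))
        ((intervalIntegrable_const (μ := volume)).add ((hii₂ hη hτ0).const_mul β)),
        ← intervalIntegral.integral_const_mul]
      congr 1
      funext σ
      ring
    have habs := abs_exp_neg_sub_exp_neg hv1 hv2
    calc |psiF a δ β π₁ τ η - psiF a δ β π₂ τ η|
        ≤ Real.exp (-((a+δ)*(τ-η))) *
          |(∫ σ in η..τ, (a + δ + β*π₁ σ)) - ∫ σ in η..τ, (a + δ + β*π₂ σ)| := habs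
    _ = Real.exp (-((a+δ)*(τ-η))) * (β * |∫ σ in η..τ, (π₁ σ - π₂ σ)|) := by
        rw [hvdiff, abs_mul, abs_of_nonneg hβ.le]
    _ ≤ Real.exp (-((a+δ)*(τ-η))) * (β * (W * Real.exp (k*τ) / k)) := by
        refine mul_le_mul_of_nonneg_left (mul_le_mul_of_nonneg_left ?_ hβ.le) (Real.exp_pos _).le
        exact hwint hη hητ
  -- Psi difference
  have Psi_diff : ∀ {η : ℝ}, 0 ≤ η →
      |(∫ τ in Set.Ioi η, psiF a δ β π₁ τ η) - ∫ τ in Set.Ioi η, psiF a δ β π₂ τ η| ≤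
        (β * W / k * Real.exp (k*η)) * (1/(a+δ-k)) := by
    intro η hη
    have hdint : (∫ τ in Set.Ioi η, psiF a δ β π₁ τ η) - (∫ τ in Set.Ioi η, psiF a δ β π₂ τ η)
        = ∫ τ in Set.Ioi η, (psiF a δ β π₁ τ η - psiF a δ β π₂ τ η) :=
      (MeasureTheory.integral_sub (psi_int₁ hη) (psi_int₂ hη)).symm
    have i1 : |∫ τ in Set.Ioi η, (psiF a δ β π₁ τ η - psiF a δ β π₂ τ η)| ≤
        ∫ τ in Set.Ioi η, |psiF a δ β π₁ τ η - psiF a δ β π₂ τ η| := by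
      simpa [Real.norm_eq_abs] using MeasureTheory.norm_integral_le_integral_norm
        (μ := volume.restrict (Set.Ioi η))
        (fun τ => psiF a δ β π₁ τ η - psiF a δ β π₂ τ η)
    have i2 : (∫ τ in Set.Ioi η, |psiF a δ β π₁ τ η - psiF a δ β π₂ τ η|) ≤
        ∫ τ in Set.Ioi η, (β * W / k * Real.exp (k*η)) * Real.exp (-((a+δ-k)*(τ-η))) := by
      refine setIntegral_mono_on (((psi_int₁ hη).sub (psi_int₂ hη)).abs)
        ((expdecay_integrableOn haδk η).const_mul _) measurableSet_Ioi (fun τ hτ => ?_)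
      have hητ : η ≤ τ := le_of_lt hτ
      refine (psi_diff hη hητ).trans (le_of_eq ?_)
      have hee : Real.exp (-((a+δ)*(τ-η))) * Real.exp (k*τ)
          = Real.exp (k*η) * Real.exp (-((a+δ-k)*(τ-η))) := by
        rw [← Real.exp_add, ← Real.exp_add]; congr 1; ring
      linear_combination (β * W / k) * hee
    have i3 : (∫ τ in Set.Ioi η, (β * W / k * Real.exp (k*η)) * Real.exp (-((a+δ-k)*(τ-η))))
        = (β * W / k * Real.exp (k*η)) * (1/(a+δ-k)) := by
      rw [MeasureTheory.integral_const_mul, expdecay_integral haδk]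
    calc |(∫ τ in Set.Ioi η, psiF a δ β π₁ τ η) - ∫ τ in Set.Ioi η, psiF a δ β π₂ τ η|
        = |∫ τ in Set.Ioi η, (psiF a δ β π₁ τ η - psiF a δ β π₂ τ η)| := by rw [hdint]
    _ ≤ ∫ τ in Set.Ioi η, |psiF a δ β π₁ τ η - psiF a δ β π₂ τ η| := i1
    _ ≤ ∫ τ in Set.Ioi η, (β * W / k * Real.exp (k*η)) * Real.exp (-((a+δ-k)*(τ-η))) := i2
    _ = (β * W / k * Real.exp (k*η)) * (1/(a+δ-k)) := i3
  -- representation of Psi as a continuous function of η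
  have PsiRep₁ : ∀ {η : ℝ}, 0 ≤ η → (∫ τ in Set.Ioi η, psiF a δ β π₁ τ η)
      = Real.exp (P₁ η) * ((∫ τ in Set.Ioi 0, Real.exp (-P₁ τ))
        - prim (fun τ => Real.exp (-P₁ τ)) η) := by
    intro η hη
    have h1 : (∫ τ in Set.Ioi η, psiF a δ β π₁ τ η)
        = Real.exp (P₁ η) * ∫ τ in Set.Ioi η, Real.exp (-P₁ τ) := by
      rw [← MeasureTheory.integral_const_mul]
      refine setIntegral_congr_fun measurableSet_Ioi (fun τ hτ => ?_)
      rw [psi_eq₁ hη (le_trans hη (le_of_lt hτ)), ← Real.exp_add, sub_eq_add_neg]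
    have hsplit : (∫ τ in Set.Ioi 0, Real.exp (-P₁ τ))
        = (∫ τ in Set.Ioc 0 η, Real.exp (-P₁ τ)) + ∫ τ in Set.Ioi η, Real.exp (-P₁ τ) := by
      rw [← MeasureTheory.setIntegral_union (Set.Ioc_disjoint_Ioi le_rfl) measurableSet_Ioi
        ((intExpP P₁ hP₁c lowP₁ le_rfl).mono_set Set.Ioc_subset_Ioi_self)
        (intExpP P₁ hP₁c lowP₁ hη), Set.Ioc_union_Ioi_eq_Ioi hη]
    have hprim : prim (fun τ => Real.exp (-P₁ τ)) η = ∫ τ in Set.Ioc 0 η, Real.exp (-P₁ τ) := by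
      rw [prim, intervalIntegral.integral_of_le hη]
    rw [h1, hprim]
    have : (∫ τ in Set.Ioi η, Real.exp (-P₁ τ))
        = (∫ τ in Set.Ioi 0, Real.exp (-P₁ τ)) - ∫ τ in Set.Ioc 0 η, Real.exp (-P₁ τ) := by
      linarith
    rw [this]
  have PsiRep₂ : ∀ {η : ℝ}, 0 ≤ η → (∫ τ in Set.Ioi η, psiF a δ β π₂ τ η)
      = Real.exp (P₂ η) * ((∫ τ in Set.Ioi 0, Real.exp (-P₂ τ))
        - prim (fun τ => Real.exp (-P₂ τ)) η) := by
    intro η hη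
    have h1 : (∫ τ in Set.Ioi η, psiF a δ β π₂ τ η)
        = Real.exp (P₂ η) * ∫ τ in Set.Ioi η, Real.exp (-P₂ τ) := by
      rw [← MeasureTheory.integral_const_mul]
      refine setIntegral_congr_fun measurableSet_Ioi (fun τ hτ => ?_)
      rw [psi_eq₂ hη (le_trans hη (le_of_lt hτ)), ← Real.exp_add, sub_eq_add_neg]
    have hsplit : (∫ τ in Set.Ioi 0, Real.exp (-P₂ τ))
        = (∫ τ in Set.Ioc 0 η, Real.exp (-P₂ τ)) + ∫ τ in Set.Ioi η, Real.exp (-P₂ τ) := by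
      rw [← MeasureTheory.setIntegral_union (Set.Ioc_disjoint_Ioi le_rfl) measurableSet_Ioi
        ((intExpP P₂ hP₂c lowP₂ le_rfl).mono_set Set.Ioc_subset_Ioi_self)
        (intExpP P₂ hP₂c lowP₂ hη), Set.Ioc_union_Ioi_eq_Ioi hη]
    have hprim : prim (fun τ => Real.exp (-P₂ τ)) η = ∫ τ in Set.Ioc 0 η, Real.exp (-P₂ τ) := by
      rw [prim, intervalIntegral.integral_of_le hη]
    rw [h1, hprim]
    have : (∫ τ in Set.Ioi η, Real.exp (-P₂ τ))
        = (∫ τ in Set.Ioi 0, Real.exp (-P₂ τ)) - ∫ τ in Set.Ioc 0 η, Real.exp (-P₂ τ) := by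
      linarith
    rw [this]
  -- phi as a continuous function of η
  have main3 : ∀ (p : ℝ → ℝ), ContinuousOn p (Set.Ici 0) → (∀ τ ≥ (0:ℝ), 0 ≤ p τ) →
      ∃ Q : ℝ → ℝ, Continuous Q ∧
        (∀ {η u : ℝ}, 0 ≤ η → 0 ≤ u → phiF a β p u η = Real.exp (Q η - Q u)) := by
    intro p hpc hpnn
    have hec : Continuous (fun τ : ℝ => a + β * p (max τ 0)) :=
      continuous_const.add (continuous_const.mul (cont_ext hpc))
    refine ⟨prim (fun τ => a + β * p (max τ 0)), prim_continuous hec, ?_⟩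
    intro η u hη hu
    show Real.exp _ = _
    have e1 : Set.EqOn (fun τ => a+β*p τ) (fun τ => a + β * p (max τ 0)) (Set.uIcc η u) := by
      intro τ hτ
      have hτ0 : (0:ℝ) ≤ τ := le_trans (le_min hη hu) hτ.1
      simp [max_eq_left hτ0]
    rw [intervalIntegral.integral_congr e1, integral_eq_prim_sub hec]
    congr 1; ring
  obtain ⟨Q₁, hQ₁c, phiQ₁⟩ := main3 π₁ hπ₁c hπ₁nn
  obtain ⟨Q₂, hQ₂c, phiQ₂⟩ := main3 π₂ hπ₂c hπ₂nn
  -- continuity of the outer integrands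
  have cont₁ : ContinuousOn (fun η => phiF a β π₁ t η * ∫ τ in Set.Ioi η, psiF a δ β π₁ τ η)
      (Set.uIcc 0 t) := by
    rw [Set.uIcc_of_le ht]
    have c1 : ContinuousOn (fun η => phiF a β π₁ t η) (Set.Icc 0 t) :=
      ContinuousOn.congr ((Real.continuous_exp.comp (hQ₁c.sub continuous_const)).continuousOn)
        (fun η hη => phiQ₁ hη.1 ht)
    have c2 : ContinuousOn (fun η => ∫ τ in Set.Ioi η, psiF a δ β π₁ τ η) (Set.Icc 0 t) :=
      ContinuousOn.congr ((Real.continuous_exp.comp hP₁c).mul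
        (continuous_const.sub (prim_continuous (hP₁c.neg.rexp)))).continuousOn
        (fun η hη => PsiRep₁ hη.1)
    exact c1.mul c2
  have cont₂ : ContinuousOn (fun η => phiF a β π₂ t η * ∫ τ in Set.Ioi η, psiF a δ β π₂ τ η)
      (Set.uIcc 0 t) := by
    rw [Set.uIcc_of_le ht]
    have c1 : ContinuousOn (fun η => phiF a β π₂ t η) (Set.Icc 0 t) :=
      ContinuousOn.congr ((Real.continuous_exp.comp (hQ₂c.sub continuous_const)).continuousOn)
        (fun η hη => phiQ₂ hη.1 ht)
    have c2 : ContinuousOn (fun η => ∫ τ in Set.Ioi η, psiF a δ β π₂ τ η) (Set.Icc 0 t) :=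
      ContinuousOn.congr ((Real.continuous_exp.comp hP₂c).mul
        (continuous_const.sub (prim_continuous (hP₂c.neg.rexp)))).continuousOn
        (fun η hη => PsiRep₂ hη.1)
    exact c1.mul c2
  -- pointwise bound for the outer integrand difference
  have ptw : ∀ η ∈ Set.Icc (0:ℝ) t,
      |phiF a β π₁ t η * (∫ τ in Set.Ioi η, psiF a δ β π₁ τ η)
        - phiF a β π₂ t η * (∫ τ in Set.Ioi η, psiF a δ β π₂ τ η)| ≤
      ((β*W/k) * Real.exp (k*t) * (1/(a+δ) + 1/(a+δ-k))) * Real.exp (-(a*(t-η))) := by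
    intro η hη
    obtain ⟨hη0, hηt⟩ := hη
    have hφd := phi_diff hη0 hηt
    have hφ2 := phi_bound π₂ hπ₂c hπ₂nn hη0 hηt
    have hφ2nn : (0:ℝ) ≤ phiF a β π₂ t η := (Real.exp_pos _).le
    have hΨ1b := Psi_bound₁ (η := η) hη0
    have hΨ1nn := Psi_nn₁ η
    have hΨd := Psi_diff (η := η) hη0
    have e : phiF a β π₁ t η * (∫ τ in Set.Ioi η, psiF a δ β π₁ τ η)
        - phiF a β π₂ t η * (∫ τ in Set.Ioi η, psiF a δ β π₂ τ η)
        = (phiF a β π₁ t η - phiF a β π₂ t η) * (∫ τ in Set.Ioi η, psiF a δ β π₁ τ η)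
        + phiF a β π₂ t η * ((∫ τ in Set.Ioi η, psiF a δ β π₁ τ η)
          - ∫ τ in Set.Ioi η, psiF a δ β π₂ τ η) := by ring
    have hkη : Real.exp (k*η) ≤ Real.exp (k*t) :=
      Real.exp_le_exp.2 (mul_le_mul_of_nonneg_left hηt hk.le)
    have key : (0:ℝ) ≤ Real.exp (-(a*(t-η))) * (β*W/k) * (1/(a+δ-k))
        * (Real.exp (k*t) - Real.exp (k*η)) := by
      have h1 : (0:ℝ) ≤ Real.exp (k*t) - Real.exp (k*η) := by linarith
      have h2 : (0:ℝ) ≤ Real.exp (-(a*(t-η))) * (β*W/k) * (1/(a+δ-k)) := by positivity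
      exact mul_nonneg h2 h1
    calc |phiF a β π₁ t η * (∫ τ in Set.Ioi η, psiF a δ β π₁ τ η)
        - phiF a β π₂ t η * (∫ τ in Set.Ioi η, psiF a δ β π₂ τ η)|
        = |(phiF a β π₁ t η - phiF a β π₂ t η) * (∫ τ in Set.Ioi η, psiF a δ β π₁ τ η)
          + phiF a β π₂ t η * ((∫ τ in Set.Ioi η, psiF a δ β π₁ τ η)
            - ∫ τ in Set.Ioi η, psiF a δ β π₂ τ η)| := by rw [e]
    _ ≤ |(phiF a β π₁ t η - phiF a β π₂ t η) * (∫ τ in Set.Ioi η, psiF a δ β π₁ τ η)|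
        + |phiF a β π₂ t η * ((∫ τ in Set.Ioi η, psiF a δ β π₁ τ η)
          - ∫ τ in Set.Ioi η, psiF a δ β π₂ τ η)| := abs_add_le _ _
    _ = |phiF a β π₁ t η - phiF a β π₂ t η| * (∫ τ in Set.Ioi η, psiF a δ β π₁ τ η)
        + phiF a β π₂ t η * |(∫ τ in Set.Ioi η, psiF a δ β π₁ τ η)
          - ∫ τ in Set.Ioi η, psiF a δ β π₂ τ η| := by
        rw [abs_mul, abs_mul, abs_of_nonneg hΨ1nn, abs_of_nonneg hφ2nn]
    _ ≤ (Real.exp (-(a*(t-η))) * (β * (W * Real.exp (k*t) / k))) * (1/(a+δ))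
        + Real.exp (-(a*(t-η))) * ((β * W / k * Real.exp (k*η)) * (1/(a+δ-k))) := by
        refine add_le_add (mul_le_mul hφd hΨ1b hΨ1nn (by positivity))
          (mul_le_mul hφ2 hΨd (abs_nonneg _) (Real.exp_pos _).le)
    _ ≤ ((β*W/k) * Real.exp (k*t) * (1/(a+δ) + 1/(a+δ-k))) * Real.exp (-(a*(t-η))) := by
        have hre : ((β*W/k) * Real.exp (k*t) * (1/(a+δ) + 1/(a+δ-k))) * Real.exp (-(a*(t-η)))
            - ((Real.exp (-(a*(t-η))) * (β * (W * Real.exp (k*t) / k))) * (1/(a+δ))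
              + Real.exp (-(a*(t-η))) * ((β * W / k * Real.exp (k*η)) * (1/(a+δ-k))))
            = Real.exp (-(a*(t-η))) * (β*W/k) * (1/(a+δ-k))
              * (Real.exp (k*t) - Real.exp (k*η)) := by ring
        linarith
  -- outer integral difference
  have Idiff : |(∫ η in (0:ℝ)..t, phiF a β π₁ t η * (∫ τ in Set.Ioi η, psiF a δ β π₁ τ η))
      - ∫ η in (0:ℝ)..t, phiF a β π₂ t η * (∫ τ in Set.Ioi η, psiF a δ β π₂ τ η)| ≤
      ((β*W/k) * Real.exp (k*t) * (1/(a+δ) + 1/(a+δ-k))) * (1/a) := by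
    have hIint₁ : IntervalIntegrable
        (fun η => phiF a β π₁ t η * ∫ τ in Set.Ioi η, psiF a δ β π₁ τ η) volume 0 t :=
      cont₁.intervalIntegrable
    have hIint₂ : IntervalIntegrable
        (fun η => phiF a β π₂ t η * ∫ τ in Set.Ioi η, psiF a δ β π₂ τ η) volume 0 t :=
      cont₂.intervalIntegrable
    have h0 : (∫ η in (0:ℝ)..t, phiF a β π₁ t η * (∫ τ in Set.Ioi η, psiF a δ β π₁ τ η))
        - (∫ η in (0:ℝ)..t, phiF a β π₂ t η * (∫ τ in Set.Ioi η, psiF a δ β π₂ τ η))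
        = ∫ η in (0:ℝ)..t, (phiF a β π₁ t η * (∫ τ in Set.Ioi η, psiF a δ β π₁ τ η)
          - phiF a β π₂ t η * (∫ τ in Set.Ioi η, psiF a δ β π₂ τ η)) :=
      (intervalIntegral.integral_sub hIint₁ hIint₂).symm
    have i1 : |∫ η in (0:ℝ)..t, (phiF a β π₁ t η * (∫ τ in Set.Ioi η, psiF a δ β π₁ τ η)
        - phiF a β π₂ t η * (∫ τ in Set.Ioi η, psiF a δ β π₂ τ η))| ≤
        ∫ η in (0:ℝ)..t, |phiF a β π₁ t η * (∫ τ in Set.Ioi η, psiF a δ β π₁ τ η)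
          - phiF a β π₂ t η * (∫ τ in Set.Ioi η, psiF a δ β π₂ τ η)| :=
      intervalIntegral.abs_integral_le_integral_abs ht
    have i2 : (∫ η in (0:ℝ)..t, |phiF a β π₁ t η * (∫ τ in Set.Ioi η, psiF a δ β π₁ τ η)
        - phiF a β π₂ t η * (∫ τ in Set.Ioi η, psiF a δ β π₂ τ η)|) ≤
        ∫ η in (0:ℝ)..t, ((β*W/k) * Real.exp (k*t) * (1/(a+δ) + 1/(a+δ-k)))
          * Real.exp (-(a*(t-η))) := by
      refine intervalIntegral.integral_mono_on (μ := volume) ht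
        ((cont₁.sub cont₂).abs.intervalIntegrable)
        ((continuous_const.mul (Real.continuous_exp.comp
          ((continuous_const.mul (continuous_const.sub continuous_id)).neg))).intervalIntegrable _ _)
        ptw
    have i3 : (∫ η in (0:ℝ)..t, ((β*W/k) * Real.exp (k*t) * (1/(a+δ) + 1/(a+δ-k)))
        * Real.exp (-(a*(t-η)))) ≤
        ((β*W/k) * Real.exp (k*t) * (1/(a+δ) + 1/(a+δ-k))) * (1/a) := by
      rw [intervalIntegral.integral_const_mul]
      exact mul_le_mul_of_nonneg_left (integral_exp_decay_le ha ht) (by positivity)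
    rw [h0]
    exact le_trans i1 (le_trans i2 i3)
  -- phi difference at η = 0
  have hφ0 : |phiF a β π₁ t 0 - phiF a β π₂ t 0| ≤ β * (W * Real.exp (k*t) / k) := by
    refine (phi_diff le_rfl ht).trans ?_
    have h1 : Real.exp (-(a*(t-0))) ≤ 1 := Real.exp_le_one_iff.2 (by nlinarith)
    exact mul_le_of_le_one_left (by positivity) h1
  -- final assembly
  have hxz : (0:ℝ) ≤ xbar0 - z := by linarith
  have hCC : (0:ℝ) ≤ β*q + a^2 + a*δ := by positivity
  have hbr : (z + phiF a β π₁ t 0 * (xbar0 - z) +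
        (β*q + a^2 + a*δ) * (xbar0 - z) *
          ∫ η in (0:ℝ)..t, phiF a β π₁ t η * (∫ τ in Set.Ioi η, psiF a δ β π₁ τ η)) -
      (z + phiF a β π₂ t 0 * (xbar0 - z) +
        (β*q + a^2 + a*δ) * (xbar0 - z) *
          ∫ η in (0:ℝ)..t, phiF a β π₂ t η * (∫ τ in Set.Ioi η, psiF a δ β π₂ τ η))
      = (phiF a β π₁ t 0 - phiF a β π₂ t 0) * (xbar0 - z)
        + (β*q + a^2 + a*δ) * (xbar0 - z) *
          ((∫ η in (0:ℝ)..t, phiF a β π₁ t η * (∫ τ in Set.Ioi η, psiF a δ β π₁ τ η))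
            - ∫ η in (0:ℝ)..t, phiF a β π₂ t η * (∫ τ in Set.Ioi η, psiF a δ β π₂ τ η)) := by
    ring
  have hbig : |(z + phiF a β π₁ t 0 * (xbar0 - z) +
        (β*q + a^2 + a*δ) * (xbar0 - z) *
          ∫ η in (0:ℝ)..t, phiF a β π₁ t η * (∫ τ in Set.Ioi η, psiF a δ β π₁ τ η)) -
      (z + phiF a β π₂ t 0 * (xbar0 - z) +
        (β*q + a^2 + a*δ) * (xbar0 - z) *
          ∫ η in (0:ℝ)..t, phiF a β π₂ t η * (∫ τ in Set.Ioi η, psiF a δ β π₂ τ η))| ≤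
      (β * (W * Real.exp (k*t) / k)) * (xbar0 - z)
        + (β*q + a^2 + a*δ) * (xbar0 - z) *
          (((β*W/k) * Real.exp (k*t) * (1/(a+δ) + 1/(a+δ-k))) * (1/a)) := by
    rw [hbr]
    refine (abs_add_le _ _).trans ?_
    rw [abs_mul, abs_mul, abs_of_nonneg hxz, abs_of_nonneg (mul_nonneg hCC hxz)]
    exact add_le_add (mul_le_mul_of_nonneg_right hφ0 hxz)
      (mul_le_mul_of_nonneg_left Idiff (mul_nonneg hCC hxz))
  have hect : Real.exp (-k*t) * Real.exp (k*t) = 1 := by rw [← Real.exp_add]; simp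
  calc Real.exp (-k*t) * |(z + phiF a β π₁ t 0 * (xbar0 - z) +
        (β*q + a^2 + a*δ) * (xbar0 - z) *
          ∫ η in (0:ℝ)..t, phiF a β π₁ t η * (∫ τ in Set.Ioi η, psiF a δ β π₁ τ η)) -
      (z + phiF a β π₂ t 0 * (xbar0 - z) +
        (β*q + a^2 + a*δ) * (xbar0 - z) *
          ∫ η in (0:ℝ)..t, phiF a β π₂ t η * (∫ τ in Set.Ioi η, psiF a δ β π₂ τ η))|
      ≤ Real.exp (-k*t) * ((β * (W * Real.exp (k*t) / k)) * (xbar0 - z)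
        + (β*q + a^2 + a*δ) * (xbar0 - z) *
          (((β*W/k) * Real.exp (k*t) * (1/(a+δ) + 1/(a+δ-k))) * (1/a))) :=
        mul_le_mul_of_nonneg_left hbig (Real.exp_pos _).le
  _ = W * (β*(xbar0 - z)/k +
        (β*q + a^2 + a*δ)*(xbar0 - z)*(β/k)*(1/(a+δ) + 1/(a+δ-k))*(1/a)) := by
      linear_combination (W * (β*(xbar0 - z)/k +
        (β*q + a^2 + a*δ)*(xbar0 - z)*(β/k)*(1/(a+δ) + 1/(a+δ-k))*(1/a))) * hect




end MFGaux

open MFGaux in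
set_option maxHeartbeats 2000000 in
/-- Weighted-norm Lipschitz estimate for the mean-field operator `M`: for
`0 < k < min_s aˢ + δ` there is `R_k > 0` such that
`‖M(x̄') − M(x̄'')‖_k ≤ λ R_k ‖x̄' − x̄''‖_k` for all `x̄', x̄'' ∈ G`, where `λ` is
the Lipschitz constant of `g` on `[z − y, x̄₀ − y]`. -/
theorem Mop_weighted_norm_lipschitz (m : ℕ) (hm : 0 < m)
    (a b n : Fin m → ℝ) (δ r qx0 z y xbar0 k lam : ℝ)
    (ha : ∀ s, 0 < a s) (hb : ∀ s, 0 < b s) (hn : ∀ s, 0 < n s)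
    (hnsum : ∑ s : Fin m, n s = 1)
    (hδ : 0 < δ) (hr : 0 < r) (hqx0 : 0 < qx0)
    (hzy : z < y) (hyx : y < xbar0)
    (hk : 0 < k) (hka : ∀ s, k < a s + δ)
    (g : ℝ → ℝ) (hgc : Continuous g) (hgmono : StrictMono g)
    (hggrow : ∃ C > (0 : ℝ), ∀ x : ℝ, |g x| ≤ C * (1 + |x|))
    (hlam : 0 ≤ lam)
    (hglip : ∀ u ∈ Set.Icc (z - y) (xbar0 - y), ∀ v ∈ Set.Icc (z - y) (xbar0 - y),
      |g u - g v| ≤ lam * |u - v|)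
    (π : Fin m → (ℝ → ℝ) → ℝ → ℝ)
    (hπ : ∀ s, ∀ x ∈ Gset z xbar0,
      ContinuousOn (π s x) (Set.Ici 0) ∧
      (∀ t ≥ (0 : ℝ), 0 ≤ π s x t) ∧
      (∀ t ≥ (0 : ℝ), IntegrableOn
        (fun η => Real.exp
            (-(∫ τ in t..η, (2 * a s + δ + ((b s) ^ 2 / r) * π s x τ))) *
          (Δop g y x η + qx0)) (Set.Ioi t)) ∧
      (∀ t ≥ (0 : ℝ), π s x t = ∫ η in Set.Ioi t,
        Real.exp (-(∫ τ in t..η, (2 * a s + δ + ((b s) ^ 2 / r) * π s x τ))) *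
          (Δop g y x η + qx0))) :
    ∃ R > (0 : ℝ), ∀ xbar' ∈ Gset z xbar0, ∀ xbar'' ∈ Gset z xbar0,
      normk k (Mop m a b n δ r qx0 z xbar0 π xbar' -
          Mop m a b n δ r qx0 z xbar0 π xbar'')
        ≤ lam * R * normk k (xbar' - xbar'') := by
  classical
  have hzx : z < xbar0 := lt_trans hzy hyx
  have hxz : (0:ℝ) ≤ xbar0 - z := by linarith
  have hb2r : ∀ s, 0 < (b s)^2/r := fun s => div_pos (pow_pos (hb s) 2) hr
  have hk2 : ∀ s, k < 2*(a s)+δ := fun s => by have := hka s; have := ha s; linarith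
  set gs := max |g (z - y)| |g (xbar0 - y)| with hgsdef
  have hgs0 : 0 ≤ gs := le_trans (abs_nonneg _) (le_max_left _ _)
  set Rs : Fin m → ℝ := fun s =>
    (1/(k*(2*(a s)+δ-k))) * (((b s)^2/r)*(xbar0 - z)/k +
      (((b s)^2/r)*qx0 + (a s)^2 + (a s)*δ)*(xbar0 - z)*(((b s)^2/r)/k)*
        (1/((a s)+δ) + 1/((a s)+δ-k))*(1/(a s))) with hRsdef
  have hRs0 : ∀ s, 0 ≤ Rs s := by
    intro s
    have h1 := ha s; have h2 := hka s; have h3 := hk2 s; have h4 := hb2r s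
    have h5 : (0:ℝ) < a s + δ - k := by linarith
    have h6 : (0:ℝ) < a s + δ := by linarith
    have h7 : (0:ℝ) < 2*(a s)+δ-k := by linarith
    simp only [hRsdef]
    positivity
  have hRpos : (0:ℝ) < (∑ s, n s * Rs s) + 1 := by
    have : (0:ℝ) ≤ ∑ s, n s * Rs s :=
      Finset.sum_nonneg (fun s _ => mul_nonneg (hn s).le (hRs0 s))
    linarith
  refine ⟨(∑ s, n s * Rs s) + 1, hRpos, ?_⟩
  intro x₁ hx₁ x₂ hx₂
  obtain ⟨hx₁c, hx₁b⟩ := hx₁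
  obtain ⟨hx₂c, hx₂b⟩ := hx₂
  set N := normk k (x₁ - x₂) with hNdef
  have hbdd : BddAbove ((fun t => Real.exp (-k * t) * |(x₁ - x₂) t|) '' Set.Ici (0:ℝ)) := by
    refine ⟨xbar0 - z, ?_⟩
    rintro v ⟨u, hu, rfl⟩
    have h1 : Real.exp (-k*u) ≤ 1 := Real.exp_le_one_iff.2 (by
      have : (0:ℝ) ≤ k*u := mul_nonneg hk.le hu
      linarith)
    have h2 : |(x₁ - x₂) u| ≤ xbar0 - z := by
      have b1 := hx₁b u hu; have b2 := hx₂b u hu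
      rw [Pi.sub_apply, abs_le]
      constructor <;> [linarith [b1.1, b2.2]; linarith [b1.2, b2.1]]
    calc Real.exp (-k*u) * |(x₁ - x₂) u| ≤ 1 * (xbar0 - z) :=
      mul_le_mul h1 h2 (abs_nonneg _) zero_le_one
    _ = xbar0 - z := one_mul _
  have key0 : ∀ t ≥ (0:ℝ), Real.exp (-k*t) * |x₁ t - x₂ t| ≤ N := by
    intro t ht
    exact le_csSup hbdd ⟨t, ht, rfl⟩
  have hN0 : 0 ≤ N := le_trans (by positivity) (key0 0 le_rfl)
  have hNb : ∀ t ≥ (0:ℝ), |x₁ t - x₂ t| ≤ N * Real.exp (k*t) := by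
    intro t ht
    have h := key0 t ht
    have he : Real.exp (-k*t) * Real.exp (k*t) = 1 := by rw [← Real.exp_add]; simp
    nlinarith [Real.exp_pos (k*t), abs_nonneg (x₁ t - x₂ t)]
  -- extended Δ functions
  have hGe : ∀ (x : ℝ → ℝ), ContinuousOn x (Set.Ici 0) →
      Continuous (fun τ => g (x (max τ 0) - y)) := fun x hxc =>
    hgc.comp ((cont_ext hxc).sub continuous_const)
  set De₁ := fun u : ℝ => |prim (fun τ => g (x₁ (max τ 0) - y)) u| with hDe₁def
  set De₂ := fun u : ℝ => |prim (fun τ => g (x₂ (max τ 0) - y)) u| with hDe₂def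
  have hDe₁c : Continuous De₁ := (prim_continuous (hGe x₁ hx₁c)).abs
  have hDe₂c : Continuous De₂ := (prim_continuous (hGe x₂ hx₂c)).abs
  have hDeq : ∀ (x : ℝ → ℝ), ∀ u ≥ (0:ℝ), Δop g y x u
      = |prim (fun τ => g (x (max τ 0) - y)) u| := by
    intro x u hu
    rw [Δop, prim]
    congr 1
    refine intervalIntegral.integral_congr (fun τ hτ => ?_)
    have hτ0 : (0:ℝ) ≤ τ := le_trans (le_min le_rfl hu) hτ.1
    rw [max_eq_left hτ0]
  have hDgs : ∀ (x : ℝ → ℝ), ContinuousOn x (Set.Ici 0) →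
      (∀ t ≥ (0:ℝ), z ≤ x t ∧ x t ≤ xbar0) →
      ∀ u ≥ (0:ℝ), |prim (fun τ => g (x (max τ 0) - y)) u| ≤ gs * u := by
    intro x hxc hxb u hu
    have h := intervalIntegral.norm_integral_le_of_norm_le_const (C := gs)
      (f := fun τ => g (x (max τ 0) - y)) (a := (0:ℝ)) (b := u) ?_
    · rw [prim]
      calc |∫ τ in (0:ℝ)..u, g (x (max τ 0) - y)| ≤ gs * |u - 0| := h
      _ = gs * u := by rw [sub_zero, abs_of_nonneg hu]
    · intro τ hτ
      have hbnd := hxb (max τ 0) (le_max_right _ _)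
      have h1 : g (x (max τ 0) - y) ≤ g (xbar0 - y) := hgmono.le_iff_le.2 (by linarith [hbnd.2])
      have h2 : g (z - y) ≤ g (x (max τ 0) - y) := hgmono.le_iff_le.2 (by linarith [hbnd.1])
      rw [Real.norm_eq_abs, abs_le]
      constructor
      · have : -gs ≤ -|g (z - y)| := neg_le_neg (le_max_left _ _)
        have h3 : -|g (z - y)| ≤ g (z - y) := neg_abs_le _
        linarith
      · have h4 : g (xbar0 - y) ≤ |g (xbar0 - y)| := le_abs_self _
        have : |g (xbar0 - y)| ≤ gs := le_max_right _ _
        linarith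
  have hdF : ∀ η ≥ (0:ℝ), |De₁ η - De₂ η| ≤ lam * N / k * Real.exp (k*η) := by
    intro η hη
    exact delta_lip g y z xbar0 k lam N hk hlam hN0 x₁ x₂ hx₁b hx₂b
      (hGe x₁ hx₁c) (hGe x₂ hx₂c) hglip hNb hη
  -- per type s bound
  have per_s : ∀ s : Fin m, ∀ t ≥ (0:ℝ),
      Real.exp (-k*t) *
        |(z + phiF (a s) ((b s) ^ 2 / r) (π s x₁) t 0 * (xbar0 - z) +
          (((b s) ^ 2 / r) * qx0 + (a s) ^ 2 + (a s) * δ) * (xbar0 - z) *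
            ∫ η in (0:ℝ)..t, phiF (a s) ((b s) ^ 2 / r) (π s x₁) t η *
              (∫ τ in Set.Ioi η, psiF (a s) δ ((b s) ^ 2 / r) (π s x₁) τ η)) -
        (z + phiF (a s) ((b s) ^ 2 / r) (π s x₂) t 0 * (xbar0 - z) +
          (((b s) ^ 2 / r) * qx0 + (a s) ^ 2 + (a s) * δ) * (xbar0 - z) *
            ∫ η in (0:ℝ)..t, phiF (a s) ((b s) ^ 2 / r) (π s x₂) t η *
              (∫ τ in Set.Ioi η, psiF (a s) δ ((b s) ^ 2 / r) (π s x₂) τ η))|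
        ≤ lam * N * Rs s := by
    intro s t ht
    obtain ⟨hπ₁c, hπ₁nn, hπ₁int, hπ₁eq⟩ := hπ s x₁ ⟨hx₁c, hx₁b⟩
    obtain ⟨hπ₂c, hπ₂nn, hπ₂int, hπ₂eq⟩ := hπ s x₂ ⟨hx₂c, hx₂b⟩
    have hint₁' : ∀ u ≥ (0:ℝ), IntegrableOn
        (fun η => Real.exp (-(∫ τ in u..η, (2*(a s)+δ+((b s)^2/r)*π s x₁ τ))) *
          (De₁ η + qx0)) (Set.Ioi u) := by
      intro u hu
      refine (hπ₁int u hu).congr_fun (fun η hη => ?_) measurableSet_Ioi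
      beta_reduce
      rw [hDeq x₁ η (le_trans hu (le_of_lt hη))]
    have heq₁' : ∀ u ≥ (0:ℝ), π s x₁ u = ∫ η in Set.Ioi u,
        Real.exp (-(∫ τ in u..η, (2*(a s)+δ+((b s)^2/r)*π s x₁ τ))) * (De₁ η + qx0) := by
      intro u hu
      rw [hπ₁eq u hu]
      refine setIntegral_congr_fun measurableSet_Ioi (fun η hη => ?_)
      rw [hDeq x₁ η (le_trans hu (le_of_lt hη))]
    have hint₂' : ∀ u ≥ (0:ℝ), IntegrableOn
        (fun η => Real.exp (-(∫ τ in u..η, (2*(a s)+δ+((b s)^2/r)*π s x₂ τ))) *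
          (De₂ η + qx0)) (Set.Ioi u) := by
      intro u hu
      refine (hπ₂int u hu).congr_fun (fun η hη => ?_) measurableSet_Ioi
      beta_reduce
      rw [hDeq x₂ η (le_trans hu (le_of_lt hη))]
    have heq₂' : ∀ u ≥ (0:ℝ), π s x₂ u = ∫ η in Set.Ioi u,
        Real.exp (-(∫ τ in u..η, (2*(a s)+δ+((b s)^2/r)*π s x₂ τ))) * (De₂ η + qx0) := by
      intro u hu
      rw [hπ₂eq u hu]
      refine setIntegral_congr_fun measurableSet_Ioi (fun η hη => ?_)
      rw [hDeq x₂ η (le_trans hu (le_of_lt hη))]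
    have hwS := piStab (a s) δ ((b s)^2/r) qx0 gs k (lam * N / k)
      (ha s) hδ (hb2r s) hqx0 hgs0 hk (hk2 s) (by positivity)
      De₁ De₂ (π s x₁) (π s x₂)
      hDe₁c (fun u => abs_nonneg _) (fun u hu => hDgs x₁ hx₁c hx₁b u hu)
      hDe₂c (fun u => abs_nonneg _) (fun u hu => hDgs x₂ hx₂c hx₂b u hu)
      hπ₁c hπ₁nn hint₁' heq₁' hπ₂c hπ₂nn hint₂' heq₂' hdF
    have hasm := assemble (a s) δ ((b s)^2/r) qx0 k ((lam * N / k)/(2*(a s)+δ-k)) z xbar0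
      (ha s) hδ (hb2r s) hqx0 hk (hka s)
      (by
        have h7 : (0:ℝ) < 2*(a s)+δ-k := by have := hk2 s; linarith
        positivity)
      hzx (π s x₁) (π s x₂) hπ₁c hπ₁nn hπ₂c hπ₂nn hwS ht
    refine hasm.trans (le_of_eq ?_)
    have h7 : (2*(a s)+δ-k) ≠ 0 := ne_of_gt (by have := hk2 s; linarith)
    have hkne : k ≠ 0 := ne_of_gt hk
    simp only [hRsdef]
    field_simp
    try ring
  -- final supremum bound
  apply Real.sSup_le
  · rintro v ⟨t, ht, rfl⟩
    have hsum : (Mop m a b n δ r qx0 z xbar0 π x₁ - Mop m a b n δ r qx0 z xbar0 π x₂) t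
        = ∑ s : Fin m, n s *
          ((z + phiF (a s) ((b s) ^ 2 / r) (π s x₁) t 0 * (xbar0 - z) +
            (((b s) ^ 2 / r) * qx0 + (a s) ^ 2 + (a s) * δ) * (xbar0 - z) *
              ∫ η in (0:ℝ)..t, phiF (a s) ((b s) ^ 2 / r) (π s x₁) t η *
                (∫ τ in Set.Ioi η, psiF (a s) δ ((b s) ^ 2 / r) (π s x₁) τ η)) -
          (z + phiF (a s) ((b s) ^ 2 / r) (π s x₂) t 0 * (xbar0 - z) +
            (((b s) ^ 2 / r) * qx0 + (a s) ^ 2 + (a s) * δ) * (xbar0 - z) *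
              ∫ η in (0:ℝ)..t, phiF (a s) ((b s) ^ 2 / r) (π s x₂) t η *
                (∫ τ in Set.Ioi η, psiF (a s) δ ((b s) ^ 2 / r) (π s x₂) τ η))) := by
      rw [Pi.sub_apply, Mop, Mop, ← Finset.sum_sub_distrib]
      refine Finset.sum_congr rfl (fun s _ => ?_)
      ring
    calc Real.exp (-k * t) * |(Mop m a b n δ r qx0 z xbar0 π x₁ -
          Mop m a b n δ r qx0 z xbar0 π x₂) t|
        ≤ Real.exp (-k * t) * ∑ s : Fin m, n s *
          |(z + phiF (a s) ((b s) ^ 2 / r) (π s x₁) t 0 * (xbar0 - z) +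
            (((b s) ^ 2 / r) * qx0 + (a s) ^ 2 + (a s) * δ) * (xbar0 - z) *
              ∫ η in (0:ℝ)..t, phiF (a s) ((b s) ^ 2 / r) (π s x₁) t η *
                (∫ τ in Set.Ioi η, psiF (a s) δ ((b s) ^ 2 / r) (π s x₁) τ η)) -
          (z + phiF (a s) ((b s) ^ 2 / r) (π s x₂) t 0 * (xbar0 - z) +
            (((b s) ^ 2 / r) * qx0 + (a s) ^ 2 + (a s) * δ) * (xbar0 - z) *
              ∫ η in (0:ℝ)..t, phiF (a s) ((b s) ^ 2 / r) (π s x₂) t η *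
                (∫ τ in Set.Ioi η, psiF (a s) δ ((b s) ^ 2 / r) (π s x₂) τ η))| := by
          refine mul_le_mul_of_nonneg_left ?_ (Real.exp_pos _).le
          rw [hsum]
          refine (Finset.abs_sum_le_sum_abs _ _).trans (le_of_eq ?_)
          refine Finset.sum_congr rfl (fun s _ => ?_)
          rw [abs_mul, abs_of_nonneg (hn s).le]
    _ = ∑ s : Fin m, n s * (Real.exp (-k * t) *
          |(z + phiF (a s) ((b s) ^ 2 / r) (π s x₁) t 0 * (xbar0 - z) +
            (((b s) ^ 2 / r) * qx0 + (a s) ^ 2 + (a s) * δ) * (xbar0 - z) *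
              ∫ η in (0:ℝ)..t, phiF (a s) ((b s) ^ 2 / r) (π s x₁) t η *
                (∫ τ in Set.Ioi η, psiF (a s) δ ((b s) ^ 2 / r) (π s x₁) τ η)) -
          (z + phiF (a s) ((b s) ^ 2 / r) (π s x₂) t 0 * (xbar0 - z) +
            (((b s) ^ 2 / r) * qx0 + (a s) ^ 2 + (a s) * δ) * (xbar0 - z) *
              ∫ η in (0:ℝ)..t, phiF (a s) ((b s) ^ 2 / r) (π s x₂) t η *
                (∫ τ in Set.Ioi η, psiF (a s) δ ((b s) ^ 2 / r) (π s x₂) τ η))|) := by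
          rw [Finset.mul_sum]
          refine Finset.sum_congr rfl (fun s _ => ?_)
          ring
    _ ≤ ∑ s : Fin m, n s * (lam * N * Rs s) := by
          refine Finset.sum_le_sum (fun s _ => ?_)
          exact mul_le_mul_of_nonneg_left (per_s s t ht) (hn s).le
    _ = lam * (∑ s, n s * Rs s) * N := by
          have he : lam * (∑ s, n s * Rs s) * N = ∑ s, lam * (n s * Rs s) * N := by
            rw [Finset.mul_sum, Finset.sum_mul]
          rw [he]
          exact Finset.sum_congr rfl (fun s _ => by ring)
    _ ≤ lam * ((∑ s, n s * Rs s) + 1) * N := by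
          have h1 : (0:ℝ) ≤ lam * N := mul_nonneg hlam hN0
          nlinarith
  · exact mul_nonneg (mul_nonneg hlam hRpos.le) hN0
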